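/- arXiv:1806.06255 — 4 statements merged into one kernel-verified Lean document; each statement's English description precedes it below -/
import Mathlib

section
/- Let n = 2m+1 be odd and let τ be a 3-form on ℝⁿ. Then τ is a vector cross product if and only if for every unit vector X ∈ ℝⁿ one has τ_X² = −id + X⊗X, i.e. the kernel of τ_X is spanned by X and the restriction of τ_X to X^⊥ is a complex structure on X^⊥. -/
open scoped RealInnerProductSpace

noncomputable section

/-- Euclidean space `ℝⁿ`. -/
abbrev Euc (n : ℕ) : Type := EuclideanSpace ℝ (Fin n)

/-- The skew-symmetric endomorphism `τ_X` of `ℝⁿ` associated to a 3-form `τ` and a vector `X`,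
characterized by `⟪τ_X Y, Z⟫ = τ (X, Y, Z)`. -/
noncomputable def contr3 {n : ℕ} (τ : AlternatingMap ℝ (Euc n) ℝ (Fin 3)) (X : Euc n) :
    Euc n →ₗ[ℝ] Euc n where
  toFun Y := ∑ i : Fin n,
    ((τ.curryLeft X).curryLeft Y ![EuclideanSpace.single i 1]) • EuclideanSpace.single i (1 : ℝ)
  map_add' Y₁ Y₂ := by
    simp [map_add, add_smul, Finset.sum_add_distrib]
  map_smul' c Y := by
    simp [map_smul, smul_smul, Finset.smul_sum]

/-- `τ` is a vector cross product: `‖τ_X Y‖² = ‖X‖²‖Y‖² − ⟪X,Y⟫²`. -/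
def IsVCP {n : ℕ} (τ : AlternatingMap ℝ (Euc n) ℝ (Fin 3)) : Prop :=
  ∀ X Y : Euc n, ‖contr3 τ X Y‖ ^ 2 = ‖X‖ ^ 2 * ‖Y‖ ^ 2 - ⟪X, Y⟫ ^ 2

/-- `σ` is a generalized vector cross product: there is a nonzero skew-symmetric endomorphism `A`
such that for every unit vector `X`, `σ_X` is orthogonally conjugate to `A`. -/
def IsGVCP {n : ℕ} (σ : AlternatingMap ℝ (Euc n) ℝ (Fin 3)) : Prop :=
  ∃ A : Euc n →ₗ[ℝ] Euc n, A ≠ 0 ∧ (∀ X Y : Euc n, ⟪A X, Y⟫ = -⟪X, A Y⟫) ∧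
    ∀ X : Euc n, ‖X‖ = 1 → ∃ u : Euc n ≃ₗᵢ[ℝ] Euc n,
      ∀ Y : Euc n, contr3 σ X Y = u (A (u.symm Y))

/-- The endomorphism `U ⊗ V : X ↦ ⟪X, V⟫ U`. -/
noncomputable def tens {n : ℕ} (U V : Euc n) : Euc n →ₗ[ℝ] Euc n where
  toFun X := ⟪X, V⟫ • U
  map_add' X₁ X₂ := by (try simp only []); rw [inner_add_left, add_smul]
  map_smul' c X := by simp only [RingHom.id_apply]; rw [real_inner_smul_left, mul_smul]

/-- The `i`-th coordinate, as a linear functional on `ℝⁿ`. -/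
noncomputable def coordL {n : ℕ} (i : Fin n) : Euc n →ₗ[ℝ] ℝ where
  toFun x := x i
  map_add' _ _ := rfl
  map_smul' _ _ := rfl

/-- The elementary 3-form `eᵢ ∧ eⱼ ∧ e_k` on `ℝⁿ`. -/
noncomputable def elem3 {n : ℕ} (i j k : Fin n) : AlternatingMap ℝ (Euc n) ℝ (Fin 3) :=
  (Matrix.detRowAlternating : AlternatingMap ℝ (Fin 3 → ℝ) ℝ (Fin 3)).compLinearMap
    (LinearMap.pi (fun s : Fin 3 => coordL (![i, j, k] s)))

/-- The action of an orthogonal transformation `α` on 3-forms: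
`(α · τ)(X,Y,Z) = τ(α⁻¹X, α⁻¹Y, α⁻¹Z)`. -/
noncomputable def oAct {n : ℕ} (α : Euc n ≃ₗᵢ[ℝ] Euc n)
    (τ : AlternatingMap ℝ (Euc n) ℝ (Fin 3)) : AlternatingMap ℝ (Euc n) ℝ (Fin 3) :=
  τ.compLinearMap α.symm.toLinearEquiv.toLinearMap

/-- The volume form `e₁ ∧ e₂ ∧ e₃` (in any `ℝⁿ` with `n ≥ 3`). -/
noncomputable def vol3Gen {n : ℕ} (h : 3 ≤ n) : AlternatingMap ℝ (Euc n) ℝ (Fin 3) :=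
  elem3 ⟨0, by omega⟩ ⟨1, by omega⟩ ⟨2, by omega⟩

/-- The fundamental `G₂` 3-form
`τ₀ = e₁∧e₂∧e₇ + e₃∧e₄∧e₇ + e₅∧e₆∧e₇ + e₁∧e₃∧e₅ − e₁∧e₄∧e₆ − e₂∧e₃∧e₆ − e₂∧e₄∧e₅`
(with 1-indexed basis vectors, stated in any `ℝⁿ` with `n ≥ 7`). -/
noncomputable def tau0Gen {n : ℕ} (h : 7 ≤ n) : AlternatingMap ℝ (Euc n) ℝ (Fin 3) :=
  elem3 ⟨0, by omega⟩ ⟨1, by omega⟩ ⟨6, by omega⟩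
  + elem3 ⟨2, by omega⟩ ⟨3, by omega⟩ ⟨6, by omega⟩
  + elem3 ⟨4, by omega⟩ ⟨5, by omega⟩ ⟨6, by omega⟩
  + elem3 ⟨0, by omega⟩ ⟨2, by omega⟩ ⟨4, by omega⟩
  - elem3 ⟨0, by omega⟩ ⟨3, by omega⟩ ⟨5, by omega⟩
  - elem3 ⟨1, by omega⟩ ⟨2, by omega⟩ ⟨5, by omega⟩
  - elem3 ⟨1, by omega⟩ ⟨3, by omega⟩ ⟨4, by omega⟩

/-- The `SU(3)` 3-form `σ₀ = e₁∧e₃∧e₅ − e₁∧e₄∧e₆ − e₂∧e₃∧e₆ − e₂∧e₄∧e₅`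
(with 1-indexed basis vectors, stated in any `ℝⁿ` with `n ≥ 6`). -/
noncomputable def sigma0Gen {n : ℕ} (h : 6 ≤ n) : AlternatingMap ℝ (Euc n) ℝ (Fin 3) :=
  elem3 ⟨0, by omega⟩ ⟨2, by omega⟩ ⟨4, by omega⟩
  - elem3 ⟨0, by omega⟩ ⟨3, by omega⟩ ⟨5, by omega⟩
  - elem3 ⟨1, by omega⟩ ⟨2, by omega⟩ ⟨5, by omega⟩
  - elem3 ⟨1, by omega⟩ ⟨3, by omega⟩ ⟨4, by omega⟩

end

section Aux
variable {n : ℕ} (τ : AlternatingMap ℝ (Euc n) ℝ (Fin 3))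

private lemma update2 (X Y Z W : Euc n) :
    Function.update ![X, Y, Z] 2 W = ![X, Y, W] := by
  ext i
  fin_cases i <;> simp

private lemma update0 (X Y Z W : Euc n) :
    Function.update ![X, Y, Z] 0 W = ![W, Y, Z] := by
  ext i
  fin_cases i <;> simp

lemma contr3_inner (X Y Z : Euc n) : ⟪contr3 τ X Y, Z⟫ = τ ![X, Y, Z] := by
  have hsum : ∀ W : Euc n, τ ![X, Y, W]
      = ∑ i : Fin n, W i * τ ![X, Y, EuclideanSpace.single i 1] := by
    intro W
    have hW : ∑ i : Fin n, W i • (EuclideanSpace.single i (1:ℝ) : Euc n) = W := by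
      have := (EuclideanSpace.basisFun (Fin n) ℝ).sum_repr W
      simpa [EuclideanSpace.basisFun_apply, EuclideanSpace.basisFun_repr] using this
    conv_lhs => rw [← update2 X Y 0 W, ← hW]
    show τ.toMultilinearMap _ = _
    rw [MultilinearMap.map_update_sum]
    refine Finset.sum_congr rfl fun i _ => ?_
    rw [MultilinearMap.map_update_smul, update2]
    rfl
  rw [hsum Z]
  simp only [contr3, LinearMap.coe_mk, AddHom.coe_mk, sum_inner, real_inner_smul_left,
    EuclideanSpace.inner_single_left, RCLike.star_def, conj_trivial, one_mul]
  refine Finset.sum_congr rfl fun i _ => ?_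
  rw [mul_comm]
  simp [Finset.sum_apply, EuclideanSpace.single_apply, Pi.single_apply]
  ring

lemma contr3_skew (X Y Z : Euc n) : ⟪contr3 τ X Y, Z⟫ = -⟪Y, contr3 τ X Z⟫ := by
  rw [contr3_inner, real_inner_comm, contr3_inner]
  have h := τ.map_swap (v := ![X, Z, Y]) (i := (1 : Fin 3)) (j := 2) (by decide)
  have hv : ![X, Z, Y] ∘ (Equiv.swap (1 : Fin 3) 2) = ![X, Y, Z] := by
    ext i
    fin_cases i <;> simp [Equiv.swap_apply_of_ne_of_ne]
  rw [hv] at h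
  rw [h]

private lemma symm_ext {S T : Euc n →ₗ[ℝ] Euc n}
    (hS : ∀ Y Z, ⟪S Y, Z⟫ = ⟪Y, S Z⟫) (hT : ∀ Y Z, ⟪T Y, Z⟫ = ⟪Y, T Z⟫)
    (h : ∀ Y, ⟪S Y, Y⟫ = ⟪T Y, Y⟫) : S = T := by
  have key : ∀ Y Z : Euc n, ⟪S Y, Z⟫ = ⟪T Y, Z⟫ := by
    intro Y Z
    have h1 := h (Y + Z)
    simp only [map_add, inner_add_left, inner_add_right] at h1
    have h2 : ⟪S Z, Y⟫ = ⟪S Y, Z⟫ := by rw [hS, real_inner_comm]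
    have h3 : ⟪T Z, Y⟫ = ⟪T Y, Z⟫ := by rw [hT, real_inner_comm]
    have h4 := h Y; have h5 := h Z
    linarith
  refine LinearMap.ext fun Y => ?_
  exact ext_inner_right ℝ fun Z => key Y Z

end Aux


/-- Let `n = 2m+1` be odd and let `τ` be a 3-form on `ℝⁿ`. Then `τ` is a vector
cross product if and only if for every unit vector `X ∈ ℝⁿ` one has `τ_X² = −id + X⊗X`. -/
theorem statement2 {m : ℕ} (τ : AlternatingMap ℝ (Euc (2 * m + 1)) ℝ (Fin 3)) :
    IsVCP τ ↔ ∀ X : Euc (2 * m + 1), ‖X‖ = 1 →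
      contr3 τ X ∘ₗ contr3 τ X = -LinearMap.id + tens X X := by
  have skew := contr3_skew τ
  have hSsymm : ∀ X Y Z, ⟪(contr3 τ X ∘ₗ contr3 τ X) Y, Z⟫
      = ⟪Y, (contr3 τ X ∘ₗ contr3 τ X) Z⟫ := by
    intro X Y Z
    simp only [LinearMap.comp_apply]
    rw [skew X ((contr3 τ X) Y) Z, skew X Y ((contr3 τ X) Z), neg_neg]
  have hTapp : ∀ X Y Z : Euc (2*m+1),
      ⟪(-LinearMap.id + tens X X : Euc (2*m+1) →ₗ[ℝ] Euc (2*m+1)) Y, Z⟫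
        = -⟪Y, Z⟫ + ⟪Y, X⟫ * ⟪X, Z⟫ := by
    intro X Y Z
    simp only [LinearMap.add_apply, LinearMap.neg_apply, LinearMap.id_apply, tens,
      LinearMap.coe_mk, AddHom.coe_mk, inner_add_left, inner_neg_left, real_inner_smul_left]
  have hnorm : ∀ X Y : Euc (2*m+1),
      ‖contr3 τ X Y‖ ^ 2 = -⟪(contr3 τ X ∘ₗ contr3 τ X) Y, Y⟫ := by
    intro X Y
    rw [← real_inner_self_eq_norm_sq]
    simp only [LinearMap.comp_apply]
    rw [skew X ((contr3 τ X) Y) Y, neg_neg]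
  constructor
  · intro h X hX
    refine symm_ext (hSsymm X) ?_ ?_
    · intro Y Z
      rw [hTapp, real_inner_comm
        ((-LinearMap.id + tens X X : Euc (2*m+1) →ₗ[ℝ] Euc (2*m+1)) Z) Y, hTapp,
        real_inner_comm Y Z, real_inner_comm X Z, real_inner_comm X Y]
      ring
    · intro Y
      have h1 := hnorm X Y
      have h2 := h X Y
      rw [hX] at h2
      rw [hTapp]
      have hYY : ⟪Y, Y⟫ = ‖Y‖ ^ 2 := real_inner_self_eq_norm_sq Y
      have hsym : ⟪Y, X⟫ = ⟪X, Y⟫ := real_inner_comm X Y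
      have hsq : ⟪X, Y⟫ ^ 2 = ⟪X, Y⟫ * ⟪X, Y⟫ := sq ⟪X, Y⟫
      rw [hsym, hYY]
      linarith [h1, h2, hsq]
  · intro h X Y
    by_cases hX : X = 0
    · subst hX
      have hz : contr3 τ 0 Y = 0 := by
        refine ext_inner_right ℝ fun Z => ?_
        rw [contr3_inner, inner_zero_left]
        exact (τ.toMultilinearMap.map_coord_zero (m := ![0, Y, Z]) 0 rfl)
      simp [hz]
    · have hXn : ‖X‖ ≠ 0 := norm_ne_zero_iff.mpr hX
      set c : ℝ := ‖X‖ with hc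
      set X' : Euc (2*m+1) := c⁻¹ • X with hX'
      have hX'n : ‖X'‖ = 1 := by
        rw [hX', norm_smul]
        simp [hc, abs_of_nonneg (norm_nonneg X), inv_mul_cancel₀ hXn]
        exact inv_mul_cancel₀ hXn
      have hXX' : X = c • X' := by
        rw [hX', smul_smul, mul_inv_cancel₀ hXn, one_smul]
      have hcontr : contr3 τ X Y = c • contr3 τ X' Y := by
        refine ext_inner_right ℝ fun Z => ?_
        rw [contr3_inner, real_inner_smul_left, contr3_inner, hXX', ← update0 X' Y Z (c • X')]
        show τ.toMultilinearMap _ = _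
        rw [MultilinearMap.map_update_smul, update0]
        rfl
      have hop := h X' hX'n
      have h1 := hnorm X' Y
      rw [hop, hTapp] at h1
      have hYY : ⟪Y, Y⟫ = ‖Y‖ ^ 2 := real_inner_self_eq_norm_sq Y
      have hsym : ⟪Y, X'⟫ = ⟪X', Y⟫ := real_inner_comm X' Y
      rw [hYY, hsym] at h1
      have h2 : ⟪X, Y⟫ = c * ⟪X', Y⟫ := by rw [hXX', real_inner_smul_left]
      have hcn : ‖c‖ ^ 2 = c ^ 2 := by rw [Real.norm_eq_abs, sq_abs]
      rw [hcontr, norm_smul, mul_pow, hcn, h2, h1]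
      ring
end

section
/- Let n = 4k with k ≥ 1, let σ be a generalized vector cross product on ℝⁿ, let X ∈ ℝⁿ be nonzero, and set E_X := (ker σ_X)^⊥. Then for every nonzero U ∈ ker(σ_X), σ_U restricts to an invertible endomorphism of E_X, and for all Y, Z ∈ ker(σ_X) one has σ_Y ∘ (σ_U|_{E_X})⁻¹ ∘ σ_Z = σ_Z ∘ (σ_U|_{E_X})⁻¹ ∘ σ_Y as endomorphisms of E_X. -/
open scoped RealInnerProductSpace

section helpers
variable {n : ℕ} (τ : AlternatingMap ℝ (Euc n) ℝ (Fin 3)) (a b c x y z : Euc n)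

lemma upd0 : Function.update ![a,b,c] (0 : Fin 3) x = ![x,b,c] := by
  funext i; fin_cases i <;> simp [Function.update]

lemma upd2 : Function.update ![a,b,c] (2 : Fin 3) z = ![a,b,z] := by
  funext i; fin_cases i <;> simp [Function.update]

lemma sw01 : (![a,b,c] : Fin 3 → Euc n) ∘ (Equiv.swap 0 1) = ![b,a,c] := by
  funext i; fin_cases i <;> simp [Equiv.swap_apply_def]

lemma sw12 : (![a,b,c] : Fin 3 → Euc n) ∘ (Equiv.swap 1 2) = ![a,c,b] := by
  funext i; fin_cases i <;> simp [Equiv.swap_apply_def]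

lemma tri_swap01 : τ ![a,b,c] = - τ ![b,a,c] := by
  rw [← sw01 a b c, AlternatingMap.map_swap _ _ (by decide), neg_neg]

lemma tri_swap12 : τ ![a,b,c] = - τ ![a,c,b] := by
  rw [← sw12 a b c, AlternatingMap.map_swap _ _ (by decide), neg_neg]

lemma contr3_apply (Y : Euc n) : contr3 τ a Y = ∑ i : Fin n, (τ ![a, Y, EuclideanSpace.single i 1]) • EuclideanSpace.single i (1:ℝ) := rfl

lemma inner_contr3 : ⟪contr3 τ a b, c⟫ = τ ![a,b,c] := by
  rw [contr3_apply]
  rw [sum_inner]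
  have h1 : ∀ i : Fin n, ⟪(τ ![a, b, EuclideanSpace.single i 1]) • EuclideanSpace.single i (1:ℝ), c⟫
      = (τ ![a, b, EuclideanSpace.single i 1]) * c i := by
    intro i
    rw [real_inner_smul_left, EuclideanSpace.inner_single_left]
    simp
  simp_rw [h1]
  have hc : ∑ i : Fin n, (c i) • (EuclideanSpace.single i (1:ℝ)) = c := by
    ext j
    have h : (∑ x : Fin n, c x • EuclideanSpace.single x (1:ℝ)) j
        = ∑ x : Fin n, (c x • EuclideanSpace.single x (1:ℝ)) j :=
      by rw [WithLp.ofLp_sum, Finset.sum_apply]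
    rw [h]
    simp [EuclideanSpace.single_apply]
  conv_rhs => rw [← hc]
  have : τ ![a, b, ∑ i : Fin n, (c i) • (EuclideanSpace.single i (1:ℝ))]
      = ∑ i : Fin n, τ ![a, b, (c i) • (EuclideanSpace.single i (1:ℝ))] := by
    rw [← upd2 a b b]
    rw [τ.map_update_sum]
    · simp_rw [upd2]
  rw [this]
  congr 1
  funext i
  rw [show (![a,b,(c i) • (EuclideanSpace.single i (1:ℝ))]) = Function.update ![a,b,b] 2 ((c i) • (EuclideanSpace.single i (1:ℝ))) from (upd2 a b b _).symm,
    τ.map_update_smul, upd2]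
  simp [mul_comm]
end helpers

section derived
variable {n : ℕ} (τ : AlternatingMap ℝ (Euc n) ℝ (Fin 3)) (a b c x y z : Euc n)

lemma contr3_left_add (a a' b : Euc n) :
    contr3 τ (a + a') b = contr3 τ a b + contr3 τ a' b := by
  apply ext_inner_right ℝ; intro v
  rw [inner_add_left, inner_contr3, inner_contr3, inner_contr3,
    show (![a+a',b,v]) = Function.update ![a,b,v] 0 (a+a') from (upd0 a b v _).symm,
    τ.map_update_add, upd0, upd0]

lemma contr3_left_smul (r : ℝ) (a b : Euc n) :
    contr3 τ (r • a) b = r • contr3 τ a b := by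
  apply ext_inner_right ℝ; intro v
  rw [real_inner_smul_left, inner_contr3, inner_contr3,
    show (![r • a,b,v]) = Function.update ![a,b,v] 0 (r • a) from (upd0 a b v _).symm,
    τ.map_update_smul, upd0]
  simp

lemma contr3_left_zero (b : Euc n) : contr3 τ 0 b = 0 := by
  have := contr3_left_smul τ 0 0 b
  simpa using this

lemma contr3_self (a : Euc n) : contr3 τ a a = 0 := by
  apply ext_inner_right ℝ; intro v
  rw [inner_contr3]
  rw [τ.map_eq_zero_of_eq ![a,a,v] (i := 0) (j := 1) rfl (by decide)]
  simp

lemma contr3_inner_skew (v x y : Euc n) :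
    ⟪contr3 τ v x, y⟫ = -⟪x, contr3 τ v y⟫ := by
  rw [inner_contr3, real_inner_comm, inner_contr3, tri_swap12]

lemma contr3_cyclic (a b c : Euc n) :
    ⟪contr3 τ a b, c⟫ = ⟪contr3 τ c a, b⟫ := by
  rw [inner_contr3, inner_contr3, tri_swap12 τ a b c, tri_swap01 τ a c b, neg_neg]

lemma contr3_swap (a b : Euc n) : contr3 τ a b = - contr3 τ b a := by
  apply ext_inner_right ℝ; intro v
  rw [inner_neg_left, inner_contr3, inner_contr3, tri_swap01]

end derived

section gvcp
open Module
variable {n : ℕ} {σ : AlternatingMap ℝ (Euc n) ℝ (Fin 3)} {A : Euc n →ₗ[ℝ] Euc n} {CA μ : ℝ}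

/-- conjugacy hypothesis -/
def ConjHyp (σ : AlternatingMap ℝ (Euc n) ℝ (Fin 3)) (A : Euc n →ₗ[ℝ] Euc n) : Prop :=
  ∀ X : Euc n, ‖X‖ = 1 → ∃ u : Euc n ≃ₗᵢ[ℝ] Euc n, ∀ Y : Euc n, contr3 σ X Y = u (A (u.symm Y))

lemma unit_upper (hcj : ConjHyp σ A) (hCA : ∀ ξ, ‖A ξ‖ ≤ CA * ‖ξ‖)
    {w : Euc n} (hw : ‖w‖ = 1) (ξ : Euc n) : ‖contr3 σ w ξ‖ ≤ CA * ‖ξ‖ := by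
  obtain ⟨u, hu⟩ := hcj w hw
  rw [hu]
  rw [u.norm_map]
  calc ‖A (u.symm ξ)‖ ≤ CA * ‖u.symm ξ‖ := hCA _
    _ = CA * ‖ξ‖ := by rw [u.symm.norm_map]

lemma ker_eq_map (u : Euc n ≃ₗᵢ[ℝ] Euc n) {w : Euc n}
    (hu : ∀ Y : Euc n, contr3 σ w Y = u (A (u.symm Y))) :
    LinearMap.ker (contr3 σ w) = (LinearMap.ker A).map (u.toLinearEquiv : Euc n →ₗ[ℝ] Euc n) := by
  ext ξ
  rw [Submodule.mem_map_equiv, LinearMap.mem_ker, LinearMap.mem_ker, hu,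
    u.map_eq_zero_iff]
  constructor <;> intro h <;> simpa using h

lemma unit_lower (hcj : ConjHyp σ A) (hμ : ∀ ξ ∈ (LinearMap.ker A)ᗮ, μ * ‖ξ‖ ≤ ‖A ξ‖)
    {w : Euc n} (hw : ‖w‖ = 1) :
    ∀ ξ ∈ (LinearMap.ker (contr3 σ w))ᗮ, μ * ‖ξ‖ ≤ ‖contr3 σ w ξ‖ := by
  obtain ⟨u, hu⟩ := hcj w hw
  intro ξ hξ
  have hmem : u.symm ξ ∈ (LinearMap.ker A)ᗮ := by
    rw [Submodule.mem_orthogonal]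
    intro a ha
    have h1 : (u a) ∈ LinearMap.ker (contr3 σ w) := by
      rw [LinearMap.mem_ker, hu]
      simp [LinearMap.mem_ker.mp ha]
    have h2 := (Submodule.mem_orthogonal _ _).mp hξ (u a) h1
    calc ⟪a, u.symm ξ⟫ = ⟪u a, u (u.symm ξ)⟫ := (u.inner_map_map a (u.symm ξ)).symm
      _ = ⟪u a, ξ⟫ := by rw [u.apply_symm_apply]
      _ = 0 := h2
  rw [hu, u.norm_map]
  calc μ * ‖ξ‖ = μ * ‖u.symm ξ‖ := by rw [u.symm.norm_map]
    _ ≤ ‖A (u.symm ξ)‖ := hμ _ hmem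

lemma unit_finrank (hcj : ConjHyp σ A) {w : Euc n} (hw : ‖w‖ = 1) :
    finrank ℝ (LinearMap.ker (contr3 σ w)) = finrank ℝ (LinearMap.ker A) := by
  obtain ⟨u, hu⟩ := hcj w hw
  rw [ker_eq_map u hu, LinearEquiv.finrank_map_eq]

lemma norm_unitize {w : Euc n} (hw : w ≠ 0) : ‖(‖w‖⁻¹ • w : Euc n)‖ = 1 := by
  rw [norm_smul, norm_inv, norm_norm]
  exact inv_mul_cancel₀ (norm_ne_zero_iff.mpr hw)

lemma contr3_norm_smul {w : Euc n} (hw : w ≠ 0) :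
    contr3 σ w = ‖w‖ • contr3 σ (‖w‖⁻¹ • w) := by
  apply LinearMap.ext; intro b
  rw [LinearMap.smul_apply, contr3_left_smul, smul_smul,
    mul_inv_cancel₀ (norm_ne_zero_iff.mpr hw), one_smul]

lemma ker_scale {w : Euc n} (hw : w ≠ 0) :
    LinearMap.ker (contr3 σ w) = LinearMap.ker (contr3 σ (‖w‖⁻¹ • w)) := by
  conv_lhs => rw [contr3_norm_smul hw]
  exact LinearMap.ker_smul _ _ (norm_ne_zero_iff.mpr hw)

lemma finrank_all (hcj : ConjHyp σ A) {w : Euc n} (hw : w ≠ 0) :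
    finrank ℝ (LinearMap.ker (contr3 σ w)) = finrank ℝ (LinearMap.ker A) := by
  rw [ker_scale hw]
  exact unit_finrank hcj (norm_unitize hw)

lemma upper_all (hcj : ConjHyp σ A) (hCA : ∀ ξ, ‖A ξ‖ ≤ CA * ‖ξ‖) (v ξ : Euc n) :
    ‖contr3 σ v ξ‖ ≤ CA * ‖v‖ * ‖ξ‖ := by
  rcases eq_or_ne v 0 with rfl | hv
  · rw [contr3_left_zero]; simp
  · rw [contr3_norm_smul hv]
    rw [LinearMap.smul_apply, norm_smul, norm_norm, mul_assoc]
    have := unit_upper hcj hCA (norm_unitize hv) ξ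
    have h0 : 0 ≤ ‖v‖ := norm_nonneg v
    calc ‖v‖ * ‖contr3 σ (‖v‖⁻¹ • v) ξ‖ ≤ ‖v‖ * (CA * ‖ξ‖) := by
          exact mul_le_mul_of_nonneg_left this h0
      _ = CA * (‖v‖ * ‖ξ‖) := by ring

lemma aux_lim {q C : ℝ} (hC : 0 ≤ C) (h : ∀ t : ℝ, 0 < t → t ≤ 1 → |q| ≤ t * C) : q = 0 := by
  by_contra hq
  have hq' : 0 < |q| := abs_pos.mpr hq
  set t := min 1 (|q| / (2 * (C + 1))) with ht
  have ht0 : 0 < t := lt_min one_pos (by positivity)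
  have ht1 : t ≤ 1 := min_le_left _ _
  have h2 := h t ht0 ht1
  have h3 : t * C ≤ (|q| / (2 * (C + 1))) * C :=
    mul_le_mul_of_nonneg_right (min_le_right _ _) hC
  have h4 : (|q| / (2 * (C + 1))) * C < |q| := by
    rw [div_mul_eq_mul_div, div_lt_iff₀ (by positivity)]
    nlinarith
  linarith
end gvcp

section lemA
variable {n : ℕ} {σ : AlternatingMap ℝ (Euc n) ℝ (Fin 3)} {A : Euc n →ₗ[ℝ] Euc n} {CA μ : ℝ}

lemma lemA_unit (hcj : ConjHyp σ A) (hCA : ∀ ξ, ‖A ξ‖ ≤ CA * ‖ξ‖) (hCA0 : 0 ≤ CA)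
    (hμpos : 0 < μ) (hμ : ∀ ξ ∈ (LinearMap.ker A)ᗮ, μ * ‖ξ‖ ≤ ‖A ξ‖)
    {x : Euc n} (hx : ‖x‖ = 1) {v : Euc n} (hv : ‖v‖ = 1) (hxv : ⟪x, v⟫ = 0)
    {w w' : Euc n} (hw : w ∈ LinearMap.ker (contr3 σ x))
    (hw' : w' ∈ LinearMap.ker (contr3 σ x)) :
    ⟪contr3 σ v w, w'⟫ = 0 := by
  apply aux_lim (C := CA * (CA * ‖w‖) * ‖w'‖ / μ) (by positivity)
  intro t ht0 ht1
  set c : ℝ := Real.sqrt (1 - t^2) with hc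
  have hc0 : 0 ≤ c := Real.sqrt_nonneg _
  have hc2 : c^2 = 1 - t^2 := Real.sq_sqrt (by nlinarith)
  set W : Euc n := c • x + t • v with hWdef
  have hW : ‖W‖ = 1 := by
    have hsq : ‖W‖^2 = 1 := by
      rw [hWdef, norm_add_sq_real, real_inner_smul_left, real_inner_smul_right,
        norm_smul, norm_smul, hxv]
      simp [Real.norm_eq_abs, abs_of_nonneg hc0, abs_of_nonneg ht0.le, hx, hv]
      linarith [hc2]
    rw [← Real.sqrt_sq (norm_nonneg W), hsq, Real.sqrt_one]
  have hSW : ∀ ξ, contr3 σ W ξ = c • contr3 σ x ξ + t • contr3 σ v ξ := by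
    intro ξ
    rw [hWdef, contr3_left_add, contr3_left_smul, contr3_left_smul]
  have hxw : contr3 σ x w = 0 := hw
  have hxw' : contr3 σ x w' = 0 := hw'
  have hSw : contr3 σ W w = t • contr3 σ v w := by rw [hSW, hxw]; simp
  have hSw' : contr3 σ W w' = t • contr3 σ v w' := by rw [hSW, hxw']; simp
  set Kt := LinearMap.ker (contr3 σ W) with hKt
  set w₁ : Euc n := w - ↑(Kt.orthogonalProjectionOnto w) with hw₁
  have hw₁mem : w₁ ∈ Ktᗮ := Submodule.sub_starProjection_mem_orthogonal (K := Kt) w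
  have hSw₁ : contr3 σ W w₁ = contr3 σ W w := by
    rw [hw₁, map_sub]
    have : contr3 σ W ↑(Kt.orthogonalProjectionOnto w) = 0 :=
      (Kt.orthogonalProjectionOnto w).2
    rw [this, sub_zero]
  have hlow : μ * ‖w₁‖ ≤ ‖contr3 σ W w₁‖ := unit_lower hcj hμ hW w₁ hw₁mem
  have hupw : ‖contr3 σ W w‖ ≤ t * (CA * ‖w‖) := by
    rw [hSw, norm_smul, Real.norm_eq_abs, abs_of_nonneg ht0.le]
    exact mul_le_mul_of_nonneg_left (unit_upper hcj hCA hv w) ht0.le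
  have hw₁norm : ‖w₁‖ ≤ t * (CA * ‖w‖) / μ := by
    rw [le_div_iff₀ hμpos]
    calc ‖w₁‖ * μ = μ * ‖w₁‖ := by ring
      _ ≤ ‖contr3 σ W w₁‖ := hlow
      _ = ‖contr3 σ W w‖ := by rw [hSw₁]
      _ ≤ t * (CA * ‖w‖) := hupw
  have hq : t * ⟪contr3 σ v w, w'⟫ = -⟪w₁, contr3 σ W w'⟫ := by
    calc t * ⟪contr3 σ v w, w'⟫ = ⟪t • contr3 σ v w, w'⟫ := (real_inner_smul_left _ _ _).symm
      _ = ⟪contr3 σ W w, w'⟫ := by rw [hSw]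
      _ = ⟪contr3 σ W w₁, w'⟫ := by rw [hSw₁]
      _ = -⟪w₁, contr3 σ W w'⟫ := contr3_inner_skew σ W w₁ w'
  have hbound : |t * ⟪contr3 σ v w, w'⟫| ≤ (t * (CA * ‖w‖) / μ) * (t * (CA * ‖w'‖)) := by
    rw [hq, abs_neg]
    calc |⟪w₁, contr3 σ W w'⟫| ≤ ‖w₁‖ * ‖contr3 σ W w'‖ := abs_real_inner_le_norm _ _
      _ ≤ (t * (CA * ‖w‖) / μ) * (t * (CA * ‖w'‖)) := by
          apply mul_le_mul hw₁norm ?_ (norm_nonneg _) (by positivity)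
          rw [hSw', norm_smul, Real.norm_eq_abs, abs_of_nonneg ht0.le]
          exact mul_le_mul_of_nonneg_left (unit_upper hcj hCA hv w') ht0.le
  rw [abs_mul, abs_of_nonneg ht0.le] at hbound
  have hfin : |⟪contr3 σ v w, w'⟫| ≤ t * (CA * (CA * ‖w‖) * ‖w'‖ / μ) := by
    have h2 : (t * (CA * ‖w‖) / μ) * (t * (CA * ‖w'‖))
        = t * (t * (CA * (CA * ‖w‖) * ‖w'‖ / μ)) := by ring
    rw [h2] at hbound
    exact le_of_mul_le_mul_left hbound ht0
  exact hfin

lemma lemA (hcj : ConjHyp σ A) (hCA : ∀ ξ, ‖A ξ‖ ≤ CA * ‖ξ‖) (hCA0 : 0 ≤ CA)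
    (hμpos : 0 < μ) (hμ : ∀ ξ ∈ (LinearMap.ker A)ᗮ, μ * ‖ξ‖ ≤ ‖A ξ‖)
    {x : Euc n} (hx : ‖x‖ = 1) {v : Euc n} (hxv : ⟪x, v⟫ = 0)
    {w w' : Euc n} (hw : w ∈ LinearMap.ker (contr3 σ x))
    (hw' : w' ∈ LinearMap.ker (contr3 σ x)) :
    ⟪contr3 σ v w, w'⟫ = 0 := by
  rcases eq_or_ne v 0 with rfl | hv
  · rw [contr3_left_zero]; simp
  · have hxv' : ⟪x, ‖v‖⁻¹ • v⟫ = 0 := by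
      rw [real_inner_smul_right, hxv, mul_zero]
    have hcore := lemA_unit hcj hCA hCA0 hμpos hμ hx (norm_unitize hv) hxv' hw hw'
    have : ⟪contr3 σ v w, w'⟫ = ‖v‖ * ⟪contr3 σ (‖v‖⁻¹ • v) w, w'⟫ := by
      conv_lhs => rw [contr3_norm_smul hv]
      rw [LinearMap.smul_apply, real_inner_smul_left]
    rw [this, hcore, mul_zero]
end lemA

section L67
variable {n : ℕ} {σ : AlternatingMap ℝ (Euc n) ℝ (Fin 3)} {A : Euc n →ₗ[ℝ] Euc n} {CA μ : ℝ}

lemma lemL6 (hcj : ConjHyp σ A) (hCA : ∀ ξ, ‖A ξ‖ ≤ CA * ‖ξ‖) (hCA0 : 0 ≤ CA)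
    (hμpos : 0 < μ) (hμ : ∀ ξ ∈ (LinearMap.ker A)ᗮ, μ * ‖ξ‖ ≤ ‖A ξ‖)
    {x : Euc n} (hx : x ≠ 0) {u w : Euc n}
    (hu : u ∈ LinearMap.ker (contr3 σ x)) (hw : w ∈ LinearMap.ker (contr3 σ x)) :
    contr3 σ u w = 0 := by
  set xh : Euc n := ‖x‖⁻¹ • x with hxhdef
  have hxh : ‖xh‖ = 1 := norm_unitize hx
  have hker : LinearMap.ker (contr3 σ x) = LinearMap.ker (contr3 σ xh) := ker_scale hx
  rw [hker] at hu hw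
  apply ext_inner_right ℝ; intro z
  rw [inner_zero_left, contr3_cyclic]
  have hdecomp : z = ⟪z, xh⟫ • xh + (z - ⟪z, xh⟫ • xh) := by abel
  have hvperp : ⟪xh, z - ⟪z, xh⟫ • xh⟫ = 0 := by
    rw [inner_sub_right, real_inner_smul_right, real_inner_self_eq_norm_sq, hxh,
      real_inner_comm xh z]
    ring
  have hxhu : contr3 σ xh u = 0 := hu
  calc ⟪contr3 σ z u, w⟫
      = ⟪contr3 σ (⟪z, xh⟫ • xh + (z - ⟪z, xh⟫ • xh)) u, w⟫ := by rw [← hdecomp]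
    _ = ⟪z, xh⟫ * ⟪contr3 σ xh u, w⟫ + ⟪contr3 σ (z - ⟪z, xh⟫ • xh) u, w⟫ := by
        rw [contr3_left_add, inner_add_left, contr3_left_smul]
        rw [inner_smul_left]
        norm_num
    _ = 0 := by
        rw [hxhu, inner_zero_left, mul_zero, zero_add]
        exact lemA hcj hCA hCA0 hμpos hμ hxh hvperp hu hw

lemma lemL7 (hcj : ConjHyp σ A) (hCA : ∀ ξ, ‖A ξ‖ ≤ CA * ‖ξ‖) (hCA0 : 0 ≤ CA)
    (hμpos : 0 < μ) (hμ : ∀ ξ ∈ (LinearMap.ker A)ᗮ, μ * ‖ξ‖ ≤ ‖A ξ‖)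
    {x : Euc n} (hx : x ≠ 0) {u : Euc n} (hu0 : u ≠ 0)
    (hu : u ∈ LinearMap.ker (contr3 σ x)) :
    LinearMap.ker (contr3 σ u) = LinearMap.ker (contr3 σ x) := by
  have hle : LinearMap.ker (contr3 σ x) ≤ LinearMap.ker (contr3 σ u) := by
    intro w hw
    exact LinearMap.mem_ker.mpr (lemL6 hcj hCA hCA0 hμpos hμ hx hu hw)
  exact (Submodule.eq_of_le_of_finrank_eq hle
    (by rw [finrank_all hcj hx, finrank_all hcj hu0])).symm
end L67


section star
variable {n : ℕ} {σ : AlternatingMap ℝ (Euc n) ℝ (Fin 3)} {A : Euc n →ₗ[ℝ] Euc n} {CA μ : ℝ}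

lemma unit_combo {p q : Euc n} (hp : ‖p‖ = 1) (hq : ‖q‖ = 1) (hpq : ⟪p, q⟫ = 0)
    {s t : ℝ} (hs : 0 ≤ s) (ht : 0 ≤ t) (hst : s^2 + t^2 = 1) :
    ‖s • p + t • q‖ = 1 := by
  have hsq : ‖s • p + t • q‖^2 = 1 := by
    rw [norm_add_sq_real, real_inner_smul_left, real_inner_smul_right,
      norm_smul, norm_smul, hpq]
    simp [Real.norm_eq_abs, abs_of_nonneg hs, abs_of_nonneg ht, hp, hq]
    linarith
  rw [← Real.sqrt_sq (norm_nonneg _), hsq, Real.sqrt_one]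

set_option maxHeartbeats 1000000 in
lemma lemStar_unit (hcj : ConjHyp σ A) (hCA : ∀ ξ, ‖A ξ‖ ≤ CA * ‖ξ‖) (hCA0 : 0 ≤ CA)
    (hμpos : 0 < μ) (hμ : ∀ ξ ∈ (LinearMap.ker A)ᗮ, μ * ‖ξ‖ ≤ ‖A ξ‖)
    {x : Euc n} (hx : ‖x‖ = 1)
    {U : Euc n} (hU0 : U ≠ 0) (hU : U ∈ LinearMap.ker (contr3 σ x))
    {e : Euc n} (he1 : ‖e‖ = 1) (he : e ∈ (LinearMap.ker (contr3 σ x))ᗮ)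
    {w w' : Euc n} (hw : w ∈ LinearMap.ker (contr3 σ x))
    (hw' : w' ∈ LinearMap.ker (contr3 σ x))
    {g : Euc n} (hUg : contr3 σ U g = contr3 σ e w) :
    ⟪contr3 σ e g, w'⟫ = 0 := by
  have hx0 : x ≠ 0 := by intro h; rw [h] at hx; simp at hx
  have hUn : (‖U‖ : ℝ) ≠ 0 := norm_ne_zero_iff.mpr hU0
  set uh : Euc n := ‖U‖⁻¹ • U with huhdef
  have huh1 : ‖uh‖ = 1 := norm_unitize hU0
  have huhK : uh ∈ LinearMap.ker (contr3 σ x) := Submodule.smul_mem _ _ hU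
  have hperp : ⟪uh, e⟫ = 0 :=
    (Submodule.mem_orthogonal _ _).mp he uh huhK
  have hσuh : ∀ ξ, contr3 σ uh ξ = ‖U‖⁻¹ • contr3 σ U ξ := fun ξ => contr3_left_smul σ _ U ξ
  have hUw : contr3 σ U w = 0 := lemL6 hcj hCA hCA0 hμpos hμ hx0 hU hw
  have hUw' : contr3 σ U w' = 0 := lemL6 hcj hCA hCA0 hμpos hμ hx0 hU hw'
  have hxK : x ∈ LinearMap.ker (contr3 σ x) := LinearMap.mem_ker.mpr (contr3_self σ x)
  have hxe : ⟪x, e⟫ = 0 := (Submodule.mem_orthogonal _ _).mp he x hxK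
  have hew_w' : ⟪contr3 σ e w, w'⟫ = 0 := lemA hcj hCA hCA0 hμpos hμ hx hxe hw hw'
  set φ : Euc n := -(‖U‖ • g) with hφdef
  have hσuφ : contr3 σ uh φ = - contr3 σ e w := by
    rw [hφdef, map_neg, map_smul, hσuh g, smul_smul, mul_inv_cancel₀ hUn, one_smul, hUg]
  have hq : ⟪contr3 σ e φ, w'⟫ = 0 := by
    apply aux_lim (C := CA * (‖w‖ + ‖φ‖) * (CA * ‖w'‖) / μ) (by positivity)
    intro t ht0 ht1
    set c : ℝ := Real.sqrt (1 - t^2) with hc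
    have hc0 : 0 ≤ c := Real.sqrt_nonneg _
    have hc2 : c^2 = 1 - t^2 := Real.sq_sqrt (by nlinarith)
    have hc1 : c ≤ 1 := by nlinarith
    have h1c : 1 - c ≤ t^2 := by nlinarith
    set W : Euc n := c • uh + t • e with hWdef
    have hW : ‖W‖ = 1 := unit_combo huh1 he1 hperp hc0 ht0.le (by linarith)
    have hSW : ∀ ξ, contr3 σ W ξ = c • contr3 σ uh ξ + t • contr3 σ e ξ := by
      intro ξ
      rw [hWdef, contr3_left_add σ (c • uh) (t • e) ξ, contr3_left_smul σ c uh ξ,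
        contr3_left_smul σ t e ξ]
    set θ : Euc n := w + t • φ with hθdef
    have hSθ : contr3 σ W θ = (t * (1 - c)) • contr3 σ e w + (t^2) • contr3 σ e φ := by
      rw [hSW θ, hθdef, map_add, map_add, map_smul, map_smul, hσuφ, hσuh w, hUw]
      rw [smul_zero]
      module
    have hnormSθ : ‖contr3 σ W θ‖ ≤ t^2 * (CA * (‖w‖ + ‖φ‖)) := by
      rw [hSθ]
      have h1 : ‖contr3 σ e w‖ ≤ CA * ‖w‖ := by
        have := upper_all hcj hCA e w; rw [he1] at this; simpa using this
      have h2 : ‖contr3 σ e φ‖ ≤ CA * ‖φ‖ := by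
        have := upper_all hcj hCA e φ; rw [he1] at this; simpa using this
      have ht2 : t * (1 - c) ≤ t^2 := by nlinarith
      calc ‖(t * (1 - c)) • contr3 σ e w + (t^2) • contr3 σ e φ‖
          ≤ ‖(t * (1 - c)) • contr3 σ e w‖ + ‖(t^2) • contr3 σ e φ‖ := norm_add_le _ _
        _ = (t * (1 - c)) * ‖contr3 σ e w‖ + t^2 * ‖contr3 σ e φ‖ := by
            rw [norm_smul, norm_smul, Real.norm_eq_abs, Real.norm_eq_abs,
              abs_of_nonneg (by nlinarith), abs_of_nonneg (by positivity)]
        _ ≤ t^2 * (CA * ‖w‖) + t^2 * (CA * ‖φ‖) := by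
            have h3 : (t * (1-c)) * ‖contr3 σ e w‖ ≤ t^2 * (CA * ‖w‖) :=
              mul_le_mul ht2 h1 (norm_nonneg _) (by positivity)
            have h4 : t^2 * ‖contr3 σ e φ‖ ≤ t^2 * (CA * ‖φ‖) :=
              mul_le_mul_of_nonneg_left h2 (by positivity)
            linarith
        _ = t^2 * (CA * (‖w‖ + ‖φ‖)) := by ring
    set Kt := LinearMap.ker (contr3 σ W) with hKt
    set θ₁ : Euc n := θ - ↑(Kt.orthogonalProjectionOnto θ) with hθ₁
    have hθ₁mem : θ₁ ∈ Ktᗮ := Submodule.sub_starProjection_mem_orthogonal (K := Kt) θ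
    have hSθ₁ : contr3 σ W θ₁ = contr3 σ W θ := by
      rw [hθ₁, map_sub, (Kt.orthogonalProjectionOnto θ).2, sub_zero]
    have hθ₁norm : ‖θ₁‖ ≤ t^2 * (CA * (‖w‖ + ‖φ‖)) / μ := by
      rw [le_div_iff₀ hμpos]
      calc ‖θ₁‖ * μ = μ * ‖θ₁‖ := by ring
        _ ≤ ‖contr3 σ W θ₁‖ := unit_lower hcj hμ hW θ₁ hθ₁mem
        _ = ‖contr3 σ W θ‖ := by rw [hSθ₁]
        _ ≤ t^2 * (CA * (‖w‖ + ‖φ‖)) := hnormSθ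
    have hSw' : contr3 σ W w' = t • contr3 σ e w' := by
      rw [hSW w', hσuh w', hUw', smul_zero, smul_zero, zero_add]
    have hIP : t^2 * ⟪contr3 σ e φ, w'⟫ = -⟪θ₁, contr3 σ W w'⟫ := by
      calc t^2 * ⟪contr3 σ e φ, w'⟫
          = (t * (1-c)) * ⟪contr3 σ e w, w'⟫ + t^2 * ⟪contr3 σ e φ, w'⟫ := by
            rw [hew_w']; ring
        _ = ⟪contr3 σ W θ, w'⟫ := by
            rw [hSθ, inner_add_left, real_inner_smul_left, real_inner_smul_left]
        _ = ⟪contr3 σ W θ₁, w'⟫ := by rw [hSθ₁]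
        _ = -⟪θ₁, contr3 σ W w'⟫ := contr3_inner_skew σ W θ₁ w'
    have hnormSw' : ‖contr3 σ W w'‖ ≤ t * (CA * ‖w'‖) := by
      rw [hSw', norm_smul, Real.norm_eq_abs, abs_of_nonneg ht0.le]
      apply mul_le_mul_of_nonneg_left ?_ ht0.le
      have := upper_all hcj hCA e w'; rw [he1] at this; simpa using this
    have hbound : |t^2 * ⟪contr3 σ e φ, w'⟫|
        ≤ (t^2 * (CA * (‖w‖ + ‖φ‖)) / μ) * (t * (CA * ‖w'‖)) := by
      rw [hIP, abs_neg]
      calc |⟪θ₁, contr3 σ W w'⟫| ≤ ‖θ₁‖ * ‖contr3 σ W w'‖ := abs_real_inner_le_norm _ _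
        _ ≤ (t^2 * (CA * (‖w‖ + ‖φ‖)) / μ) * (t * (CA * ‖w'‖)) :=
            mul_le_mul hθ₁norm hnormSw' (norm_nonneg _) (by positivity)
    rw [abs_mul, abs_of_nonneg (by positivity : (0:ℝ) ≤ t^2)] at hbound
    have h2 : (t^2 * (CA * (‖w‖ + ‖φ‖)) / μ) * (t * (CA * ‖w'‖))
        = t^2 * (t * (CA * (‖w‖ + ‖φ‖) * (CA * ‖w'‖) / μ)) := by ring
    rw [h2] at hbound
    exact le_of_mul_le_mul_left hbound (by positivity)
  have hφe : contr3 σ e φ = -(‖U‖ • contr3 σ e g) := by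
    rw [hφdef, map_neg, map_smul]
  rw [hφe, inner_neg_left, real_inner_smul_left, neg_eq_zero] at hq
  rcases mul_eq_zero.mp hq with h | h
  · exact absurd h hUn
  · exact h
end star

section final
variable {n : ℕ} {σ : AlternatingMap ℝ (Euc n) ℝ (Fin 3)} {A : Euc n →ₗ[ℝ] Euc n} {CA μ : ℝ}

lemma lemStar (hcj : ConjHyp σ A) (hCA : ∀ ξ, ‖A ξ‖ ≤ CA * ‖ξ‖) (hCA0 : 0 ≤ CA)
    (hμpos : 0 < μ) (hμ : ∀ ξ ∈ (LinearMap.ker A)ᗮ, μ * ‖ξ‖ ≤ ‖A ξ‖)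
    {x : Euc n} (hx : ‖x‖ = 1)
    {U : Euc n} (hU0 : U ≠ 0) (hU : U ∈ LinearMap.ker (contr3 σ x))
    {e : Euc n} (he : e ∈ (LinearMap.ker (contr3 σ x))ᗮ)
    {w w' : Euc n} (hw : w ∈ LinearMap.ker (contr3 σ x))
    (hw' : w' ∈ LinearMap.ker (contr3 σ x))
    {g : Euc n} (hUg : contr3 σ U g = contr3 σ e w) :
    ⟪contr3 σ e g, w'⟫ = 0 := by
  rcases eq_or_ne e 0 with rfl | he0
  · rw [contr3_left_zero]; simp
  · have hen : (‖e‖ : ℝ) ≠ 0 := norm_ne_zero_iff.mpr he0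
    set eh : Euc n := ‖e‖⁻¹ • e with hehdef
    have heh1 : ‖eh‖ = 1 := norm_unitize he0
    have hehmem : eh ∈ (LinearMap.ker (contr3 σ x))ᗮ := Submodule.smul_mem _ _ he
    set gh : Euc n := ‖e‖⁻¹ • g with hghdef
    have hUgh : contr3 σ U gh = contr3 σ eh w := by
      rw [hghdef, map_smul, hUg, hehdef, contr3_left_smul]
    have hcore := lemStar_unit hcj hCA hCA0 hμpos hμ hx hU0 hU heh1 hehmem hw hw' hUgh
    have hexp : contr3 σ e g = (‖e‖ * ‖e‖) • contr3 σ eh gh := by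
      rw [hghdef, contr3_norm_smul he0, ← hehdef, LinearMap.smul_apply, map_smul,
        smul_smul]
      congr 1
      field_simp
    rw [hexp, real_inner_smul_left, hcore, mul_zero]

lemma lemQ (hcj : ConjHyp σ A) (hCA : ∀ ξ, ‖A ξ‖ ≤ CA * ‖ξ‖) (hCA0 : 0 ≤ CA)
    (hμpos : 0 < μ) (hμ : ∀ ξ ∈ (LinearMap.ker A)ᗮ, μ * ‖ξ‖ ≤ ‖A ξ‖)
    {x : Euc n} (hx : ‖x‖ = 1)
    {U : Euc n} (hU0 : U ≠ 0) (hU : U ∈ LinearMap.ker (contr3 σ x))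
    {e f : Euc n} (he : e ∈ (LinearMap.ker (contr3 σ x))ᗮ)
    (hf : f ∈ (LinearMap.ker (contr3 σ x))ᗮ)
    {w w' : Euc n} (hw : w ∈ LinearMap.ker (contr3 σ x))
    (hw' : w' ∈ LinearMap.ker (contr3 σ x))
    {ge gf : Euc n} (hge : contr3 σ U ge = contr3 σ e w)
    (hgf : contr3 σ U gf = contr3 σ f w) :
    ⟪contr3 σ e gf, w'⟫ + ⟪contr3 σ f ge, w'⟫ = 0 := by
  have h1 := lemStar hcj hCA hCA0 hμpos hμ hx hU0 hU he hw hw' hge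
  have h2 := lemStar hcj hCA hCA0 hμpos hμ hx hU0 hU hf hw hw' hgf
  have hefmem : e + f ∈ (LinearMap.ker (contr3 σ x))ᗮ := Submodule.add_mem _ he hf
  have hgef : contr3 σ U (ge + gf) = contr3 σ (e + f) w := by
    rw [map_add, hge, hgf, contr3_left_add]
  have h3 := lemStar hcj hCA hCA0 hμpos hμ hx hU0 hU hefmem hw hw' hgef
  rw [contr3_left_add] at h3
  simp only [map_add, inner_add_left] at h3
  -- h3 : ⟪σ_e ge,w'⟫+⟪σ_e gf,w'⟫+(⟪σ_f ge,w'⟫+⟪σ_f gf,w'⟫) = 0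
  rw [h1] at h3
  rw [h2] at h3
  linarith
end final

section final2
variable {n : ℕ} {σ : AlternatingMap ℝ (Euc n) ℝ (Fin 3)} {A : Euc n →ₗ[ℝ] Euc n} {CA μ : ℝ}

lemma exists_mu (A : Euc n →ₗ[ℝ] Euc n) :
    ∃ μ : ℝ, 0 < μ ∧ ∀ ξ ∈ (LinearMap.ker A)ᗮ, μ * ‖ξ‖ ≤ ‖A ξ‖ := by
  classical
  set g : ↥(LinearMap.ker A)ᗮ →ₗ[ℝ] Euc n := A ∘ₗ (Submodule.subtype _) with hgdef
  have hginj : LinearMap.ker g = ⊥ := by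
    apply LinearMap.ker_eq_bot'.mpr
    rintro ⟨ξ, hξ⟩ hgξ
    have hker : ξ ∈ LinearMap.ker A := by
      simpa [hgdef] using hgξ
    have h0 : ⟪ξ, ξ⟫ = 0 := (Submodule.mem_orthogonal _ _).mp hξ ξ hker
    exact Subtype.ext (inner_self_eq_zero.mp h0)
  obtain ⟨Kc, hKc, hanti⟩ := LinearMap.exists_antilipschitzWith g hginj
  have hKc' : (0:ℝ) < (Kc:ℝ) := hKc
  refine ⟨(Kc:ℝ)⁻¹, by positivity, fun ξ hξ => ?_⟩
  have h := hanti.le_mul_dist (⟨ξ, hξ⟩ : ↥(LinearMap.ker A)ᗮ) 0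
  rw [map_zero, dist_zero_right, dist_zero_right] at h
  have hg0 : g (⟨ξ, hξ⟩ : ↥(LinearMap.ker A)ᗮ) = A ξ := rfl
  have hnrm : ‖(⟨ξ, hξ⟩ : ↥(LinearMap.ker A)ᗮ)‖ = ‖ξ‖ := rfl
  rw [hg0, hnrm] at h
  rw [inv_mul_le_iff₀ hKc']
  exact h

lemma memE (hcj : ConjHyp σ A) (hCA : ∀ ξ, ‖A ξ‖ ≤ CA * ‖ξ‖) (hCA0 : 0 ≤ CA)
    (hμpos : 0 < μ) (hμ : ∀ ξ ∈ (LinearMap.ker A)ᗮ, μ * ‖ξ‖ ≤ ‖A ξ‖)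
    {x : Euc n} (hx : x ≠ 0) {W : Euc n} (hW : W ∈ LinearMap.ker (contr3 σ x)) :
    ∀ v ∈ (LinearMap.ker (contr3 σ x))ᗮ, contr3 σ W v ∈ (LinearMap.ker (contr3 σ x))ᗮ := by
  intro v hv
  rw [Submodule.mem_orthogonal]
  intro w'' hw''
  rw [real_inner_comm, contr3_inner_skew]
  rw [lemL6 hcj hCA hCA0 hμpos hμ hx hW hw'']
  simp
end final2

/-- Let `n = 4k` with `k ≥ 1`, let `σ` be a generalized vector cross product
on `ℝⁿ`, let `X ∈ ℝⁿ` be nonzero, and set `E_X := (ker σ_X)^⊥`. Then for every nonzero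
`U ∈ ker(σ_X)`, `σ_U` restricts to an invertible endomorphism of `E_X`, and for all
`Y, Z ∈ ker(σ_X)` one has `σ_Y ∘ (σ_U|_{E_X})⁻¹ ∘ σ_Z = σ_Z ∘ (σ_U|_{E_X})⁻¹ ∘ σ_Y` as
endomorphisms of `E_X` (the inverse being taken in the sense of a two-sided inverse `B`). -/
theorem statement10 {k : ℕ} (hk : 1 ≤ k) (σ : AlternatingMap ℝ (Euc (4 * k)) ℝ (Fin 3))
    (hσ : IsGVCP σ) (X : Euc (4 * k)) (hX : X ≠ 0)
    (U : Euc (4 * k)) (hU : U ≠ 0) (hUker : U ∈ LinearMap.ker (contr3 σ X)) :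
    ∃ hEU : ∀ v ∈ (LinearMap.ker (contr3 σ X))ᗮ, contr3 σ U v ∈ (LinearMap.ker (contr3 σ X))ᗮ,
      Function.Bijective ((contr3 σ U).restrict hEU) ∧
      ∀ Y Z : Euc (4 * k), Y ∈ LinearMap.ker (contr3 σ X) → Z ∈ LinearMap.ker (contr3 σ X) →
        ∃ (hY : ∀ v ∈ (LinearMap.ker (contr3 σ X))ᗮ,
            contr3 σ Y v ∈ (LinearMap.ker (contr3 σ X))ᗮ)
          (hZ : ∀ v ∈ (LinearMap.ker (contr3 σ X))ᗮ,
            contr3 σ Z v ∈ (LinearMap.ker (contr3 σ X))ᗮ),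
          ∀ B : ((LinearMap.ker (contr3 σ X))ᗮ : Submodule ℝ (Euc (4 * k))) →ₗ[ℝ]
              ((LinearMap.ker (contr3 σ X))ᗮ : Submodule ℝ (Euc (4 * k))),
            (contr3 σ U).restrict hEU ∘ₗ B = LinearMap.id →
            B ∘ₗ (contr3 σ U).restrict hEU = LinearMap.id →
            (contr3 σ Y).restrict hY ∘ₗ B ∘ₗ (contr3 σ Z).restrict hZ =
              (contr3 σ Z).restrict hZ ∘ₗ B ∘ₗ (contr3 σ Y).restrict hY := by
  classical
  obtain ⟨A, hA0, hAsk, hcjraw⟩ := hσ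
  have hcj : ConjHyp σ A := hcjraw
  obtain ⟨CA, hCA0, hCA⟩ : ∃ CA : ℝ, 0 ≤ CA ∧ ∀ ξ, ‖A ξ‖ ≤ CA * ‖ξ‖ := by
    refine ⟨‖LinearMap.toContinuousLinearMap A‖, norm_nonneg _, fun ξ => ?_⟩
    have h2 : ‖A ξ‖ = ‖(LinearMap.toContinuousLinearMap A) ξ‖ := rfl
    rw [h2]
    exact (LinearMap.toContinuousLinearMap A).le_opNorm ξ
  obtain ⟨μ, hμpos, hμ⟩ := exists_mu A
  have hEU : ∀ v ∈ (LinearMap.ker (contr3 σ X))ᗮ,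
      contr3 σ U v ∈ (LinearMap.ker (contr3 σ X))ᗮ :=
    memE hcj hCA hCA0 hμpos hμ hX hUker
  have hkerU : LinearMap.ker (contr3 σ U) = LinearMap.ker (contr3 σ X) :=
    lemL7 hcj hCA hCA0 hμpos hμ hX hU hUker
  have hinj : Function.Injective ((contr3 σ U).restrict hEU) := by
    rw [← LinearMap.ker_eq_bot]
    apply (Submodule.eq_bot_iff _).mpr
    rintro ⟨ξ, hξ⟩ hmem
    rw [LinearMap.mem_ker] at hmem
    have hval : contr3 σ U ξ = 0 := by
      have := congrArg Subtype.val hmem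
      rw [LinearMap.restrict_apply] at this
      simpa using this
    have hmemK : ξ ∈ LinearMap.ker (contr3 σ X) := hkerU ▸ LinearMap.mem_ker.mpr hval
    have h0 : ⟪ξ, ξ⟫ = 0 := (Submodule.mem_orthogonal _ _).mp hξ ξ hmemK
    exact Subtype.ext (inner_self_eq_zero.mp h0)
  refine ⟨hEU, ⟨hinj, LinearMap.injective_iff_surjective.mp hinj⟩, ?_⟩
  intro Y Z hYK hZK
  have hYE : ∀ v ∈ (LinearMap.ker (contr3 σ X))ᗮ,
      contr3 σ Y v ∈ (LinearMap.ker (contr3 σ X))ᗮ :=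
    memE hcj hCA hCA0 hμpos hμ hX hYK
  have hZE : ∀ v ∈ (LinearMap.ker (contr3 σ X))ᗮ,
      contr3 σ Z v ∈ (LinearMap.ker (contr3 σ X))ᗮ :=
    memE hcj hCA hCA0 hμpos hμ hX hZK
  refine ⟨hYE, hZE, ?_⟩
  intro B hB1 hB2
  set xh : Euc (4*k) := ‖X‖⁻¹ • X with hxhdef
  have hxh1 : ‖xh‖ = 1 := norm_unitize hX
  have hKx : LinearMap.ker (contr3 σ X) = LinearMap.ker (contr3 σ xh) := ker_scale hX
  have hBap : ∀ η : ↥(LinearMap.ker (contr3 σ X))ᗮ, contr3 σ U ↑(B η) = ↑η := by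
    intro η
    have h := LinearMap.ext_iff.mp hB1 η
    simp only [LinearMap.comp_apply, LinearMap.id_apply] at h
    calc contr3 σ U ↑(B η) = ↑((contr3 σ U).restrict hEU (B η)) := by
          rw [LinearMap.restrict_apply]
      _ = ↑η := by rw [h]
  apply LinearMap.ext
  intro η
  simp only [LinearMap.comp_apply]
  apply Subtype.ext
  rw [LinearMap.restrict_apply, LinearMap.restrict_apply]
  -- goal : contr3 σ Y ↑(B (restrict hZE η)) = contr3 σ Z ↑(B (restrict hYE η))
  set e : Euc (4*k) := (η : Euc (4*k)) with hedef
  have heE : e ∈ (LinearMap.ker (contr3 σ X))ᗮ := η.2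
  set Pe : Euc (4*k) := ↑(B ((contr3 σ Z).restrict hZE η)) with hPedef
  set Qe : Euc (4*k) := ↑(B ((contr3 σ Y).restrict hYE η)) with hQedef
  have hPeE : Pe ∈ (LinearMap.ker (contr3 σ X))ᗮ := (B ((contr3 σ Z).restrict hZE η)).2
  have hQeE : Qe ∈ (LinearMap.ker (contr3 σ X))ᗮ := (B ((contr3 σ Y).restrict hYE η)).2
  have hUPe : contr3 σ U Pe = contr3 σ Z e := by
    rw [hPedef, hBap ((contr3 σ Z).restrict hZE η), LinearMap.restrict_apply]
  have hUQe : contr3 σ U Qe = contr3 σ Y e := by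
    rw [hQedef, hBap ((contr3 σ Y).restrict hYE η), LinearMap.restrict_apply]
  show contr3 σ Y Pe = contr3 σ Z Qe
  have hkey : ∀ f ∈ (LinearMap.ker (contr3 σ X))ᗮ,
      ⟪contr3 σ Y Pe - contr3 σ Z Qe, f⟫ = 0 := by
    intro f hf
    rw [inner_sub_left, sub_eq_zero]
    set Pf : Euc (4*k) := ↑(B ⟨contr3 σ Z f, hZE f hf⟩) with hPfdef
    have hUPf : contr3 σ U Pf = contr3 σ Z f := by
      rw [hPfdef, hBap ⟨contr3 σ Z f, hZE f hf⟩]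
    have hgeq : contr3 σ U (-Pe) = contr3 σ e Z := by
      rw [map_neg, hUPe, contr3_swap σ e Z]
    have hgfq : contr3 σ U (-Pf) = contr3 σ f Z := by
      rw [map_neg, hUPf, contr3_swap σ f Z]
    have hUxh : U ∈ LinearMap.ker (contr3 σ xh) := hKx ▸ hUker
    have heE' : e ∈ (LinearMap.ker (contr3 σ xh))ᗮ := by rw [← hKx]; exact heE
    have hfE' : f ∈ (LinearMap.ker (contr3 σ xh))ᗮ := by rw [← hKx]; exact hf
    have hZ' : Z ∈ LinearMap.ker (contr3 σ xh) := hKx ▸ hZK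
    have hY' : Y ∈ LinearMap.ker (contr3 σ xh) := hKx ▸ hYK
    have hQ := lemQ hcj hCA hCA0 hμpos hμ hxh1 hU hUxh heE' hfE' hZ' hY' hgeq hgfq
    -- hQ : ⟪contr3 σ e (-Pf), Y⟫ + ⟪contr3 σ f (-Pe), Y⟫ = 0
    rw [map_neg, map_neg, inner_neg_left, inner_neg_left] at hQ
    have hQ' : ⟪contr3 σ e Pf, Y⟫ + ⟪contr3 σ f Pe, Y⟫ = 0 := by linarith
    rw [contr3_cyclic σ e Pf Y, contr3_cyclic σ f Pe Y] at hQ'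
    -- hQ' : ⟪σ_Y e, Pf⟫ + ⟪σ_Y f, Pe⟫ = 0
    calc ⟪contr3 σ Y Pe, f⟫
        = -⟪Pe, contr3 σ Y f⟫ := contr3_inner_skew σ Y Pe f
      _ = -⟪contr3 σ Y f, Pe⟫ := by rw [real_inner_comm]
      _ = ⟪contr3 σ Y e, Pf⟫ := by linarith
      _ = ⟪contr3 σ U Qe, Pf⟫ := by rw [hUQe]
      _ = -⟪Qe, contr3 σ U Pf⟫ := contr3_inner_skew σ U Qe Pf
      _ = -⟪Qe, contr3 σ Z f⟫ := by rw [hUPf]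
      _ = ⟪contr3 σ Z Qe, f⟫ := (contr3_inner_skew σ Z Qe f).symm
  have hDmem : contr3 σ Y Pe - contr3 σ Z Qe ∈ (LinearMap.ker (contr3 σ X))ᗮ :=
    Submodule.sub_mem _ (hYE Pe hPeE) (hZE Qe hQeE)
  have hD0 := hkey _ hDmem
  rw [inner_self_eq_zero] at hD0
  exact sub_eq_zero.mp hD0
end

section
/- Let n = 4k with k ≥ 1 and let σ be a 3-form on ℝⁿ such that dim ker(σ_X) = 2d for every nonzero X ∈ ℝⁿ. Then, regarding each σ_X as a 2-form via the inner product, one has (σ_X)^{∧(2k−d)} ∧ σ_W = 0 for all X, W ∈ ℝⁿ, where (σ_X)^{∧(2k−d)} denotes the (2k−d)-fold wedge power of σ_X. -/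
open scoped RealInnerProductSpace

/-- The 2-vector in the exterior algebra `Λℝⁿ` corresponding (via the inner product) to a
skew-symmetric endomorphism `A` of `ℝⁿ`: `½ ∑ᵢⱼ ⟪A eᵢ, eⱼ⟫ eᵢ ∧ eⱼ`. -/
noncomputable def skewToTwoVector {n : ℕ} (A : Euc n →ₗ[ℝ] Euc n) :
    ExteriorAlgebra ℝ (Euc n) :=
  (2⁻¹ : ℝ) • ∑ i : Fin n, ∑ j : Fin n,
    ⟪A (EuclideanSpace.single i 1), EuclideanSpace.single j 1⟫ •
      (ExteriorAlgebra.ι ℝ (EuclideanSpace.single i (1 : ℝ)) *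
        ExteriorAlgebra.ι ℝ (EuclideanSpace.single j (1 : ℝ)))


open scoped RealInnerProductSpace
open ExteriorAlgebra Module Finset

namespace St14

variable {n : ℕ}

/-- standard basis vector -/
noncomputable def ee (n : ℕ) (i : Fin n) : Euc n := EuclideanSpace.single i 1

lemma euc_expand (x : Euc n) : ∑ i : Fin n, x i • ee n i = x := by
  ext j
  have h : (∑ i : Fin n, x i • ee n i) j = ∑ i : Fin n, (x i • ee n i) j :=
    by rw [WithLp.ofLp_sum, Finset.sum_apply]
  rw [h]
  simp [ee, EuclideanSpace.single_apply]

lemma inner_ee (x : Euc n) (j : Fin n) : ⟪x, ee n j⟫ = x j := by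
  simp [ee, EuclideanSpace.inner_single_right]

lemma upd2 (X Y a z : Euc n) : Function.update ![X, Y, a] (2 : Fin 3) z = ![X, Y, z] := by
  funext i
  fin_cases i <;> simp [Function.update]

/-- slice of an alternating 3-form as a linear functional in the last argument -/
noncomputable def sliceL (τ : AlternatingMap ℝ (Euc n) ℝ (Fin 3)) (X Y : Euc n) :
    Euc n →ₗ[ℝ] ℝ where
  toFun z := τ ![X, Y, z]
  map_add' a b := by
    show τ ![X, Y, a + b] = τ ![X, Y, a] + τ ![X, Y, b]
    rw [← upd2 X Y 0 (a + b), ← upd2 X Y 0 a, ← upd2 X Y 0 b]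
    exact τ.map_update_add _ 2 a b
  map_smul' c a := by
    show τ ![X, Y, c • a] = c • τ ![X, Y, a]
    rw [← upd2 X Y 0 (c • a), ← upd2 X Y 0 a]
    exact τ.map_update_smul _ 2 c a

lemma contr3_apply (τ : AlternatingMap ℝ (Euc n) ℝ (Fin 3)) (X Y : Euc n) :
    contr3 τ X Y = ∑ i : Fin n, τ ![X, Y, ee n i] • ee n i := rfl

lemma inner_contr3 (τ : AlternatingMap ℝ (Euc n) ℝ (Fin 3)) (X Y Z : Euc n) :
    ⟪contr3 τ X Y, Z⟫ = τ ![X, Y, Z] := by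
  rw [contr3_apply, sum_inner]
  have h1 : ∀ i : Fin n, ⟪τ ![X, Y, ee n i] • ee n i, Z⟫ = Z i • τ ![X, Y, ee n i] := by
    intro i
    rw [real_inner_smul_left, real_inner_comm, inner_ee, smul_eq_mul, mul_comm]
  rw [Finset.sum_congr rfl fun i _ => h1 i]
  have h2 : τ ![X, Y, Z] = sliceL τ X Y Z := rfl
  rw [h2, ← euc_expand Z, map_sum]
  simp only [map_smul, euc_expand]
  rfl

lemma contr3_skew (τ : AlternatingMap ℝ (Euc n) ℝ (Fin 3)) (X Y Z : Euc n) :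
    ⟪contr3 τ X Y, Z⟫ = -⟪Y, contr3 τ X Z⟫ := by
  rw [inner_contr3, real_inner_comm, inner_contr3]
  have hs := τ.map_swap ![X, Z, Y] (i := 1) (j := 2) (by decide)
  have he : (![X, Z, Y] ∘ Equiv.swap (1 : Fin 3) 2) = ![X, Y, Z] := by
    funext i
    fin_cases i <;> simp [Equiv.swap_apply_of_ne_of_ne]
  rw [he] at hs
  rw [hs]

end St14

namespace St14

variable {n : ℕ}

lemma stv_eq (A : Euc n →ₗ[ℝ] Euc n) :
    skewToTwoVector A = (2⁻¹ : ℝ) • ∑ i : Fin n,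
      ExteriorAlgebra.ι ℝ (ee n i) * ExteriorAlgebra.ι ℝ (A (ee n i)) := by
  unfold skewToTwoVector
  congr 1
  refine Finset.sum_congr rfl fun i _ => ?_
  have : ∀ j : Fin n, ⟪A (EuclideanSpace.single i 1), EuclideanSpace.single j 1⟫
      = (A (ee n i)) j := fun j => inner_ee _ j
  calc ∑ j : Fin n, ⟪A (EuclideanSpace.single i 1), EuclideanSpace.single j 1⟫ •
        (ExteriorAlgebra.ι ℝ (EuclideanSpace.single i (1:ℝ)) *
          ExteriorAlgebra.ι ℝ (EuclideanSpace.single j (1:ℝ)))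
      = ExteriorAlgebra.ι ℝ (ee n i) *
          ∑ j : Fin n, ExteriorAlgebra.ι ℝ ((A (ee n i)) j • ee n j) := by
        rw [Finset.mul_sum]
        refine Finset.sum_congr rfl fun j _ => ?_
        rw [this j, map_smul, mul_smul_comm]
        rfl
    _ = ExteriorAlgebra.ι ℝ (ee n i) * ExteriorAlgebra.ι ℝ (A (ee n i)) := by
        rw [← map_sum, euc_expand]

end St14

namespace St14

open ExteriorAlgebra

variable {n : ℕ}

lemma range_mem_orth (A : Euc n →ₗ[ℝ] Euc n) (hA : ∀ x y : Euc n, ⟪A x, y⟫ = -⟪x, A y⟫)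
    (x : Euc n) : A x ∈ (LinearMap.ker A)ᗮ := by
  rw [Submodule.mem_orthogonal]
  intro u hu
  rw [LinearMap.mem_ker] at hu
  rw [real_inner_comm, hA, hu, inner_zero_right, neg_zero]

lemma stv_eq2 (A : Euc n →ₗ[ℝ] Euc n) :
    skewToTwoVector A = (2⁻¹ : ℝ) • ∑ i : Fin n,
      ι ℝ ((Submodule.orthogonalProjection (LinearMap.ker A)ᗮ (ee n i) : Euc n)) * ι ℝ (A (ee n i)) := by
  rw [stv_eq]
  congr 1
  set K := LinearMap.ker A
  set Q : Euc n → Euc n := fun v => (Submodule.orthogonalProjection K v : Euc n) with hQ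
  set P : Euc n → Euc n := fun v => (Submodule.orthogonalProjection Kᗮ v : Euc n) with hP
  have hsplit : ∀ v : Euc n, v = Q v + P v := fun v =>
    (K.starProjection_add_starProjection_orthogonal v).symm
  have hzero : ∑ i : Fin n, ι ℝ (Q (ee n i)) * ι ℝ (A (ee n i)) = 0 := by
    have hcoord : ∀ i j : Fin n, (Q (ee n i)) j = (Q (ee n j)) i := by
      intro i j
      rw [← inner_ee (Q (ee n i)) j, ← inner_ee (Q (ee n j)) i]
      exact (Submodule.inner_starProjection_left_eq_right K (ee n i) (ee n j)).trans
        (real_inner_comm _ _)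
    calc ∑ i : Fin n, ι ℝ (Q (ee n i)) * ι ℝ (A (ee n i))
        = ∑ i : Fin n, ∑ j : Fin n, (Q (ee n i)) j • (ι ℝ (ee n j) * ι ℝ (A (ee n i))) := by
          refine Finset.sum_congr rfl fun i _ => ?_
          conv_lhs => rw [← euc_expand (Q (ee n i))]
          rw [map_sum, Finset.sum_mul]
          refine Finset.sum_congr rfl fun j _ => ?_
          rw [map_smul, smul_mul_assoc]
      _ = ∑ j : Fin n, ι ℝ (ee n j) * ι ℝ (A (∑ i : Fin n, (Q (ee n j)) i • ee n i)) := by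
          rw [Finset.sum_comm]
          refine Finset.sum_congr rfl fun j _ => ?_
          rw [map_sum, map_sum, Finset.mul_sum]
          refine Finset.sum_congr rfl fun i _ => ?_
          rw [hcoord i j, map_smul, map_smul, mul_smul_comm]
      _ = 0 := by
          refine Finset.sum_eq_zero fun j _ => ?_
          rw [euc_expand]
          have : A (Q (ee n j)) = 0 := by
            have hm : Q (ee n j) ∈ K := (Submodule.orthogonalProjection K (ee n j)).2
            rwa [← LinearMap.mem_ker]
          rw [this, map_zero, mul_zero]
  calc ∑ i : Fin n, ι ℝ (ee n i) * ι ℝ (A (ee n i))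
      = ∑ i : Fin n, (ι ℝ (Q (ee n i)) * ι ℝ (A (ee n i))
          + ι ℝ (P (ee n i)) * ι ℝ (A (ee n i))) := by
        refine Finset.sum_congr rfl fun i _ => ?_
        have hiota : ι ℝ (ee n i) = ι ℝ (Q (ee n i)) + ι ℝ (P (ee n i)) := by
          conv_lhs => rw [hsplit (ee n i)]
          rw [map_add]
        rw [hiota, add_mul]
    _ = ∑ i : Fin n, ι ℝ (P (ee n i)) * ι ℝ (A (ee n i)) := by
        rw [Finset.sum_add_distrib, hzero, zero_add]

end St14

namespace St14

open ExteriorAlgebra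

variable {n : ℕ}

lemma list_prod_zero (W : Submodule ℝ (Euc n)) (L : List (Euc n))
    (hL : ∀ x ∈ L, x ∈ W) (hlen : Module.finrank ℝ W < L.length) :
    (L.map (ι ℝ)).prod = 0 := by
  have hv : ¬ LinearIndependent ℝ L.get := by
    intro h
    have h' : LinearIndependent ℝ (fun i : Fin L.length =>
        (⟨L.get i, hL _ (L.get_mem i)⟩ : W)) := by
      apply LinearIndependent.of_comp W.subtype
      exact h
    have := h'.fintype_card_le_finrank
    rw [Fintype.card_fin] at this
    omega
  have h0 := AlternatingMap.map_linearDependent (ExteriorAlgebra.ιMulti ℝ L.length) L.get hv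
  rw [ExteriorAlgebra.ιMulti_apply] at h0
  have he : (List.ofFn fun i => ι ℝ (L.get i)) = L.map (ι ℝ) := by
    rw [show (fun i => ι ℝ (L.get i)) = (ι ℝ) ∘ L.get from rfl, ← List.map_ofFn, List.ofFn_get]
  rwa [he] at h0

/-- span of products of `2*m` ι's of elements of `W` -/
noncomputable def Tspan (W : Submodule ℝ (Euc n)) (m : ℕ) :
    Submodule ℝ (ExteriorAlgebra ℝ (Euc n)) :=
  Submodule.span ℝ {z | ∃ L : List (Euc n),
    (∀ x ∈ L, x ∈ W) ∧ L.length = 2 * m ∧ z = (L.map (ι ℝ)).prod}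

lemma pow_mem_Tspan (W : Submodule ℝ (Euc n)) (a b : Fin n → Euc n)
    (ha : ∀ i, a i ∈ W) (hb : ∀ i, b i ∈ W) (m : ℕ) :
    (∑ i : Fin n, ι ℝ (a i) * ι ℝ (b i)) ^ m ∈ Tspan W m := by
  induction m with
  | zero =>
    rw [pow_zero]
    exact Submodule.subset_span ⟨[], by simp, by simp, by simp⟩
  | succ m ih =>
    rw [pow_succ]
    set u := ∑ i : Fin n, ι ℝ (a i) * ι ℝ (b i) with hu
    have key : ∀ z ∈ Tspan W m, z * u ∈ Tspan W (m + 1) := by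
      intro z hz
      induction hz using Submodule.span_induction with
      | mem z hzm =>
        obtain ⟨L, hLW, hLl, rfl⟩ := hzm
        rw [hu, Finset.mul_sum]
        refine Submodule.sum_mem _ fun i _ => ?_
        have : (L.map (ι ℝ)).prod * (ι ℝ (a i) * ι ℝ (b i))
            = ((L ++ [a i, b i]).map (ι ℝ)).prod := by
          rw [List.map_append, List.prod_append]
          simp [mul_assoc]
        rw [this]
        refine Submodule.subset_span ⟨L ++ [a i, b i], ?_, ?_, rfl⟩
        · intro x hx
          rcases List.mem_append.1 hx with h | h
          · exact hLW x h
          · simp only [List.mem_cons, List.mem_singleton, List.not_mem_nil, or_false] at h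
            rcases h with h | h
            · rw [h]; exact ha i
            · rw [h]; exact hb i
        · simp [hLl]; ring
      | zero => rw [zero_mul]; exact Submodule.zero_mem _
      | add x y hx hy ihx ihy => rw [add_mul]; exact Submodule.add_mem _ ihx ihy
      | smul c x hx ihx => rw [smul_mul_assoc]; exact Submodule.smul_mem _ c ihx
    exact key _ ih

lemma Tspan_eq_bot (W : Submodule ℝ (Euc n)) (m : ℕ) (hm : Module.finrank ℝ W < 2 * m) :
    Tspan W m = ⊥ := by
  rw [Tspan, ← Submodule.span_empty (R := ℝ)]
  apply le_antisymm
  · rw [Submodule.span_le]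
    rintro z ⟨L, hLW, hLl, rfl⟩
    have : (L.map (ι ℝ)).prod = 0 := list_prod_zero W L hLW (by omega)
    rw [this]
    simp
  · exact Submodule.span_mono (by simp)

lemma key_vanish (A : Euc n →ₗ[ℝ] Euc n) (hA : ∀ x y : Euc n, ⟪A x, y⟫ = -⟪x, A y⟫)
    (m : ℕ) (hm : Module.finrank ℝ ((LinearMap.ker A)ᗮ : Submodule ℝ (Euc n)) < 2 * m) :
    skewToTwoVector A ^ m = 0 := by
  rw [stv_eq2, smul_pow]
  set W := (LinearMap.ker A)ᗮ
  have h := pow_mem_Tspan W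
    (fun i => (Submodule.orthogonalProjection W (ee n i) : Euc n)) (fun i => A (ee n i))
    (fun i => (Submodule.orthogonalProjection W (ee n i)).2) (fun i => range_mem_orth A hA (ee n i)) m
  rw [Tspan_eq_bot W m hm, Submodule.mem_bot] at h
  rw [h, smul_zero]

end St14

namespace St14

open ExteriorAlgebra

variable {n : ℕ}

lemma contr3_add (τ : AlternatingMap ℝ (Euc n) ℝ (Fin 3)) (X Y : Euc n) :
    contr3 τ (X + Y) = contr3 τ X + contr3 τ Y := by
  refine LinearMap.ext fun Z => ?_
  rw [LinearMap.add_apply]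
  rw [contr3_apply, contr3_apply, contr3_apply, ← Finset.sum_add_distrib]
  refine Finset.sum_congr rfl fun i _ => ?_
  rw [← add_smul]
  congr 1
  have h : ∀ V : Euc n, τ ![V, Z, ee n i] = ((τ.curryLeft V).curryLeft Z) ![ee n i] := fun _ => rfl
  rw [h, h, h, map_add]
  rfl

lemma contr3_smul (τ : AlternatingMap ℝ (Euc n) ℝ (Fin 3)) (c : ℝ) (X : Euc n) :
    contr3 τ (c • X) = c • contr3 τ X := by
  refine LinearMap.ext fun Z => ?_
  rw [LinearMap.smul_apply]
  rw [contr3_apply, contr3_apply, Finset.smul_sum]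
  refine Finset.sum_congr rfl fun i _ => ?_
  rw [smul_smul]
  congr 1
  have h : ∀ V : Euc n, τ ![V, Z, ee n i] = ((τ.curryLeft V).curryLeft Z) ![ee n i] := fun _ => rfl
  rw [h, h, map_smul]
  rfl

lemma stv_add (A B : Euc n →ₗ[ℝ] Euc n) :
    skewToTwoVector (A + B) = skewToTwoVector A + skewToTwoVector B := by
  rw [stv_eq, stv_eq, stv_eq, ← smul_add, ← Finset.sum_add_distrib]
  congr 1
  refine Finset.sum_congr rfl fun i _ => ?_
  rw [LinearMap.add_apply, map_add, mul_add]

lemma stv_smul (c : ℝ) (A : Euc n →ₗ[ℝ] Euc n) :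
    skewToTwoVector (c • A) = c • skewToTwoVector A := by
  have h : ∑ i : Fin n, ι ℝ (ee n i) * ι ℝ ((c • A) (ee n i))
      = c • ∑ i : Fin n, ι ℝ (ee n i) * ι ℝ (A (ee n i)) := by
    rw [Finset.smul_sum]
    exact Finset.sum_congr rfl fun i _ => by rw [LinearMap.smul_apply, map_smul, mul_smul_comm]
  rw [stv_eq, stv_eq, h, smul_comm]

lemma stv_zero : skewToTwoVector (0 : Euc n →ₗ[ℝ] Euc n) = 0 := by
  rw [stv_eq]
  simp

lemma iota_pair_commute (a b : Euc n) (z : ExteriorAlgebra ℝ (Euc n)) :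
    ∀ c d : Euc n, Commute (ι ℝ a * ι ℝ b) (ι ℝ c * ι ℝ d) := by
  have sw : ∀ x y : Euc n, ι ℝ x * ι ℝ y = -(ι ℝ y * ι ℝ x) := fun x y =>
    eq_neg_of_add_eq_zero_left (ExteriorAlgebra.ι_add_mul_swap x y)
  have h1 : ∀ x y v : Euc n, (ι ℝ x * ι ℝ y) * ι ℝ v = ι ℝ v * (ι ℝ x * ι ℝ y) := by
    intro x y v
    rw [mul_assoc, sw y v, mul_neg, ← mul_assoc, sw x v, neg_mul, neg_neg, mul_assoc]
  intro c d
  exact Commute.mul_right (h1 a b c) (h1 a b d)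

lemma stv_commute (A B : Euc n →ₗ[ℝ] Euc n) :
    Commute (skewToTwoVector A) (skewToTwoVector B) := by
  rw [stv_eq, stv_eq]
  apply Commute.smul_left
  apply Commute.smul_right
  apply Commute.sum_left
  intro i _
  apply Commute.sum_right
  intro j _
  exact iota_pair_commute _ _ 0 _ _

lemma coeff_vanish {V : Type*} [AddCommGroup V] [Module ℝ V] (m : ℕ) (c : ℕ → V)
    (h : ∀ t : ℝ, ∑ j ∈ Finset.range (m + 1), t ^ j • c j = 0) :
    ∀ j, j ≤ m → c j = 0 := by
  intro j hj
  rw [← Module.forall_dual_apply_eq_zero_iff ℝ]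
  intro φ
  set p : Polynomial ℝ :=
    ∑ i ∈ Finset.range (m + 1), Polynomial.C (φ (c i)) * Polynomial.X ^ i with hp
  have hpe : ∀ t : ℝ, p.eval t = 0 := by
    intro t
    rw [hp]
    rw [Polynomial.eval_finset_sum]
    have : ∀ i ∈ Finset.range (m + 1),
        (Polynomial.C (φ (c i)) * Polynomial.X ^ i).eval t = φ (t ^ i • c i) := by
      intro i _
      rw [map_smul, smul_eq_mul, Polynomial.eval_mul, Polynomial.eval_C, Polynomial.eval_pow,
        Polynomial.eval_X, mul_comm]
    rw [Finset.sum_congr rfl this, ← map_sum, h t, map_zero]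
  have hp0 : p = 0 := Polynomial.funext (by simp [hpe])
  have hc := congrArg (fun q => Polynomial.coeff q j) hp0
  simp only [hp, Polynomial.finset_sum_coeff, Polynomial.coeff_C_mul, Polynomial.coeff_X_pow,
    Polynomial.coeff_zero] at hc
  rw [Finset.sum_eq_single j (fun i _ hij => by simp [Ne.symm hij])
    (fun hjm => absurd (Finset.mem_range.2 (by omega)) hjm)] at hc
  simpa using hc

end St14

set_option maxHeartbeats 1000000 in
/-- Let `n = 4k` with `k ≥ 1` and let `σ` be a 3-form on `ℝⁿ` such that
`dim ker(σ_X) = 2d` for every nonzero `X ∈ ℝⁿ`. Then, regarding each `σ_X` as a 2-form via the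
inner product, one has `(σ_X)^{∧(2k−d)} ∧ σ_W = 0` for all `X, W ∈ ℝⁿ`. -/
theorem statement14 {k d : ℕ} (hk : 1 ≤ k) (σ : AlternatingMap ℝ (Euc (4 * k)) ℝ (Fin 3))
    (hd : ∀ X : Euc (4 * k), X ≠ 0 →
      Module.finrank ℝ (LinearMap.ker (contr3 σ X)) = 2 * d) :
    ∀ X W : Euc (4 * k),
      skewToTwoVector (contr3 σ X) ^ (2 * k - d) * skewToTwoVector (contr3 σ W) = 0 := by
  intro X W
  have hcontr0 : contr3 σ (0 : Euc (4 * k)) = 0 := by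
    rw [← zero_smul ℝ (0 : Euc (4 * k)), St14.contr3_smul, zero_smul]
  -- d ≤ 2 * k
  have he0 : (St14.ee (4 * k) ⟨0, by omega⟩) ≠ 0 := by
    intro h
    have h1 := congrArg (fun v : Euc (4 * k) => v ⟨0, by omega⟩) h
    simp [St14.ee, EuclideanSpace.single_apply] at h1
  have hd2k : d ≤ 2 * k := by
    have h1 := hd _ he0
    have h2 : Module.finrank ℝ (LinearMap.ker (contr3 σ (St14.ee (4 * k) ⟨0, by omega⟩)))
        ≤ Module.finrank ℝ (Euc (4 * k)) := Submodule.finrank_le _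
    rw [h1, finrank_euclideanSpace_fin] at h2
    omega
  -- the key vanishing
  have key2 : ∀ Z : Euc (4 * k),
      skewToTwoVector (contr3 σ Z) ^ (2 * k - d + 1) = 0 := by
    intro Z
    by_cases hZ : Z = 0
    · rw [hZ, hcontr0, St14.stv_zero, zero_pow (by omega)]
    · apply St14.key_vanish _ (fun x y => St14.contr3_skew σ Z x y)
      have h1 := hd Z hZ
      have h2 := Submodule.finrank_add_finrank_orthogonal
        (K := LinearMap.ker (contr3 σ Z)) (𝕜 := ℝ)
      rw [h1, finrank_euclideanSpace_fin] at h2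
      omega
  by_cases hc : 2 * k - d = 0
  · rw [hc, pow_zero, one_mul]
    have h1 := key2 W
    rw [hc, zero_add, pow_one] at h1
    exact h1
  · by_cases hX : X = 0
    · rw [show skewToTwoVector (contr3 σ X) = 0 by rw [hX, hcontr0, St14.stv_zero],
        zero_pow hc, zero_mul]
    · by_cases hXW : ∃ c : ℝ, W = c • X
      · obtain ⟨c, rfl⟩ := hXW
        rw [St14.contr3_smul, St14.stv_smul, mul_smul_comm, ← pow_succ, key2 X, smul_zero]
      · -- the polynomial argument
        set m := 2 * k - d + 1 with hm
        have hne : ∀ t : ℝ, X + t • W ≠ 0 := by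
          intro t h
          rcases eq_or_ne t 0 with ht | ht
          · rw [ht, zero_smul, add_zero] at h
            exact hX h
          · apply hXW
            refine ⟨-t⁻¹, ?_⟩
            have h2 : t • W = -X := by
              rw [add_comm] at h
              exact (add_eq_zero_iff_eq_neg).1 h
            have h3 : t⁻¹ • (t • W) = t⁻¹ • (-X) := by rw [h2]
            rw [smul_smul, inv_mul_cancel₀ ht, one_smul] at h3
            rw [h3, smul_neg, ← neg_smul]
        have hexp : ∀ t : ℝ, ∑ j ∈ Finset.range (m + 1),
            t ^ j • (((m.choose (m - j) : ℕ) : ℝ) •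
              (skewToTwoVector (contr3 σ X) ^ (m - j)
                * skewToTwoVector (contr3 σ W) ^ j)) = 0 := by
          intro t
          have h0 := key2 (X + t • W)
          rw [St14.contr3_add, St14.contr3_smul, St14.stv_add, St14.stv_smul] at h0
          have hcomm : Commute (skewToTwoVector (contr3 σ X))
              (t • skewToTwoVector (contr3 σ W)) :=
            (St14.stv_commute _ _).smul_right t
          rw [hcomm.add_pow] at h0
          rw [← Finset.sum_range_reflect] at h0
          rw [← h0]
          refine Finset.sum_congr rfl fun j hj => ?_
          rw [Finset.mem_range] at hj
          have h4 : m + 1 - 1 - j = m - j := by omega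
          have h5 : m - (m - j) = j := by omega
          have h6 : (skewToTwoVector (contr3 σ X) ^ (m - j) * skewToTwoVector (contr3 σ W) ^ j)
              * ((m.choose (m - j) : ℕ) : ExteriorAlgebra ℝ (Euc (4 * k)))
              = (m.choose (m - j)) • (skewToTwoVector (contr3 σ X) ^ (m - j)
                * skewToTwoVector (contr3 σ W) ^ j) := by
            rw [← (Nat.cast_commute (m.choose (m - j)) _).eq, ← nsmul_eq_mul]
          rw [h4, h5, smul_pow, mul_smul_comm, smul_mul_assoc, h6,
            ← Nat.cast_smul_eq_nsmul ℝ]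
        have hco := St14.coeff_vanish m
          (fun j => ((m.choose (m - j) : ℕ) : ℝ) •
            (skewToTwoVector (contr3 σ X) ^ (m - j)
              * skewToTwoVector (contr3 σ W) ^ j)) hexp 1 (by omega)
        beta_reduce at hco
        have h7 : m - 1 = 2 * k - d := by omega
        have h8 : m.choose (m - 1) = m := by
          rw [Nat.choose_symm (by omega : 1 ≤ m), Nat.choose_one_right]
        rw [h8, h7, pow_one, smul_eq_zero] at hco
        rcases hco with hco | hco
        · exact absurd hco (Nat.cast_ne_zero.2 (by omega))
        · exact hco
end

section
/- Let A and B be skew-symmetric endomorphisms of an n-dimensional real inner product space such that tr(A^{2k}) = tr(B^{2k}) for every integer k ≥ 1. Then A and B are orthogonally conjugate, i.e. there exists an orthogonal transformation u with B = u ∘ A ∘ u⁻¹. -/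
open scoped RealInnerProductSpace
open Module

theorem trace_decomp {E : Type*} [NormedAddCommGroup E] [InnerProductSpace ℝ E] [FiniteDimensional ℝ E]
    (P : Submodule ℝ E) (f : E →ₗ[ℝ] E) (h : ∀ x ∈ P, f x ∈ P) (h' : ∀ x ∈ Pᗮ, f x ∈ Pᗮ) :
    LinearMap.trace ℝ E f = LinearMap.trace ℝ P (f.restrict h) + LinearMap.trace ℝ Pᗮ (f.restrict h') := by
  set π : E →ₗ[ℝ] P := (P.orthogonalProjectionOnto).toLinearMap with hπ
  set π' : E →ₗ[ℝ] Pᗮ := (Pᗮ.orthogonalProjectionOnto).toLinearMap with hπ'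
  have hid : P.subtype ∘ₗ π + Pᗮ.subtype ∘ₗ π' = LinearMap.id := by
    ext x
    exact P.starProjection_add_starProjection_orthogonal x
  have key : f = (f ∘ₗ P.subtype) ∘ₗ π + (f ∘ₗ Pᗮ.subtype) ∘ₗ π' := by
    rw [LinearMap.comp_assoc, LinearMap.comp_assoc, ← LinearMap.comp_add, hid]
    ext x; simp
  have e1 : π ∘ₗ (f ∘ₗ P.subtype) = f.restrict h := by
    ext p
    have := Submodule.starProjection_eq_self_iff.2 (h p p.2)
    exact this
  have e1' : π' ∘ₗ (f ∘ₗ Pᗮ.subtype) = f.restrict h' := by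
    ext p
    have := Submodule.starProjection_eq_self_iff.2 (h' p p.2)
    simp only [LinearMap.comp_apply, LinearMap.restrict_coe_apply, Submodule.coe_subtype, hπ',
      ContinuousLinearMap.coe_coe]
    exact this
  calc LinearMap.trace ℝ E f
      = LinearMap.trace ℝ E ((f ∘ₗ P.subtype) ∘ₗ π) + LinearMap.trace ℝ E ((f ∘ₗ Pᗮ.subtype) ∘ₗ π') := by
        conv_lhs => rw [key]
        rw [map_add]
    _ = LinearMap.trace ℝ P (π ∘ₗ (f ∘ₗ P.subtype)) + LinearMap.trace ℝ Pᗮ (π' ∘ₗ (f ∘ₗ Pᗮ.subtype)) := by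
        rw [LinearMap.trace_comp_comm' π (f ∘ₗ P.subtype), LinearMap.trace_comp_comm' π' (f ∘ₗ Pᗮ.subtype)]
    _ = _ := by rw [e1, e1']

theorem trace_diag {E : Type*} [NormedAddCommGroup E] [InnerProductSpace ℝ E] [FiniteDimensional ℝ E]
    {m : ℕ} (b : OrthonormalBasis (Fin m) ℝ E) (f : E →ₗ[ℝ] E) (c : Fin m → ℝ)
    (hf : ∀ i, f (b i) = c i • b i) :
    LinearMap.trace ℝ E f = ∑ i, c i := by
  rw [LinearMap.trace_eq_matrix_trace ℝ b.toBasis f, Matrix.trace]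
  congr 1
  ext i
  rw [Matrix.diag_apply, LinearMap.toMatrix_apply, OrthonormalBasis.coe_toBasis,
    OrthonormalBasis.coe_toBasis_repr_apply, hf i, map_smul]
  simp [OrthonormalBasis.repr_self]

theorem psum_max_le {m m' : ℕ} (lam : Fin m → ℝ) (kap : Fin m' → ℝ)
    (hl : ∀ i, 0 ≤ lam i)
    (hsum : ∀ k : ℕ, 1 ≤ k → ∑ i, lam i ^ k = ∑ j, kap j ^ k)
    (i0 : Fin m) (hpos : 0 < lam i0) (M' : ℝ) (hM'0 : 0 ≤ M')
    (hbound : ∀ j, kap j ≤ M') (hkn : ∀ j, 0 ≤ kap j) :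
    lam i0 ≤ M' := by
  by_contra hlt
  push_neg at hlt
  set M := lam i0 with hM
  have hr1 : M' / M < 1 := (div_lt_one hpos).2 hlt
  have hr0 : 0 ≤ M' / M := div_nonneg hM'0 hpos.le
  obtain ⟨k0, hk0⟩ := exists_pow_lt_of_lt_one (show (0:ℝ) < 1 / (m' + 1) by positivity) hr1
  set k := k0 + 1 with hk
  have hrk : (M' / M) ^ k < 1 / (m' + 1) :=
    lt_of_le_of_lt (pow_le_pow_of_le_one hr0 hr1.le (Nat.le_succ k0)) hk0
  have h1 : M ^ k ≤ ∑ i, lam i ^ k := by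
    apply Finset.single_le_sum (f := fun i => lam i ^ k) (fun i _ => pow_nonneg (hl i) k)
    exact Finset.mem_univ i0
  have h2 : ∑ j, kap j ^ k ≤ (m' : ℝ) * M' ^ k := by
    calc ∑ j, kap j ^ k ≤ ∑ _j : Fin m', M' ^ k :=
          Finset.sum_le_sum fun j _ => pow_le_pow_left₀ (hkn j) (hbound j) k
      _ = (m' : ℝ) * M' ^ k := by simp [Finset.sum_const, nsmul_eq_mul]
  have hMk : (0:ℝ) < M ^ k := pow_pos hpos k
  have h3 : (m' : ℝ) * M' ^ k < M ^ k := by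
    have hMk' : M' ^ k = (M' / M) ^ k * M ^ k := by
      rw [div_pow, div_mul_eq_mul_div, mul_div_assoc, div_self (ne_of_gt hMk), mul_one]
    rw [hMk', ← mul_assoc]
    have hmm : (m' : ℝ) * (M' / M) ^ k < 1 := by
      have h4 : (m' : ℝ) * (M' / M) ^ k ≤ (m' : ℝ) * (1 / (m' + 1)) :=
        mul_le_mul_of_nonneg_left hrk.le (Nat.cast_nonneg m')
      have h5 : (m' : ℝ) * (1 / (m' + 1)) < 1 := by
        rw [mul_one_div]
        refine (div_lt_one (by positivity)).2 (by linarith [Nat.cast_nonneg (α := ℝ) m'])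
      linarith
    calc (m' : ℝ) * (M' / M) ^ k * M ^ k < 1 * M ^ k :=
          mul_lt_mul_of_pos_right hmm hMk
      _ = M ^ k := one_mul _
  linarith [hsum k (Nat.le_add_left 1 k0)]

open Module Submodule


section Aux
variable {E : Type*} [NormedAddCommGroup E] [InnerProductSpace ℝ E]

/-- coe of powers of restriction -/
theorem restrict_pow_coe (f : E →ₗ[ℝ] E) (P : Submodule ℝ E) (h : ∀ x ∈ P, f x ∈ P)
    (k : ℕ) (x : P) :
    (((f.restrict h) ^ k) x : E) = (f ^ k) x := by
  induction k generalizing x with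
  | zero => simp
  | succ k ih =>
    rw [pow_succ, pow_succ, Module.End.mul_apply, Module.End.mul_apply]
    rw [ih ((f.restrict h) x), LinearMap.restrict_coe_apply]

theorem pow_mapsTo (f : E →ₗ[ℝ] E) (P : Submodule ℝ E) (h : ∀ x ∈ P, f x ∈ P) (k : ℕ) :
    ∀ x ∈ P, (f ^ k) x ∈ P := by
  induction k with
  | zero => intro x hx; simpa using hx
  | succ k ih =>
    intro x hx
    rw [pow_succ, Module.End.mul_apply]
    exact ih _ (h x hx)

theorem restrict_pow_eq (f : E →ₗ[ℝ] E) (P : Submodule ℝ E) (h : ∀ x ∈ P, f x ∈ P) (k : ℕ) :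
    (f.restrict h) ^ k = (f ^ k).restrict (pow_mapsTo f P h k) := by
  ext x
  rw [LinearMap.restrict_coe_apply]
  exact restrict_pow_coe f P h k x
end Aux

theorem skew_spec {E : Type*} [NormedAddCommGroup E] [InnerProductSpace ℝ E]
    [FiniteDimensional ℝ E] {n : ℕ} (hE : Module.finrank ℝ E = n)
    (A : E →ₗ[ℝ] E) (hA : ∀ X Y : E, ⟪A X, Y⟫ = -⟪X, A Y⟫) :
    ∃ (b : OrthonormalBasis (Fin n) ℝ E) (lam : Fin n → ℝ),
      (∀ i, 0 ≤ lam i) ∧ (∀ i, A (A (b i)) = (-lam i) • b i) ∧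
      (∀ k, 1 ≤ k → LinearMap.trace ℝ E (A ^ (2*k)) = (-1:ℝ)^k * ∑ i, lam i ^ k) ∧
      ((∀ i, lam i = 0) → A = 0) := by
  set S : E →ₗ[ℝ] E := -(A ∘ₗ A) with hS
  have hSapp : ∀ x, S x = -(A (A x)) := fun x => rfl
  have hSsym : S.IsSymmetric := by
    intro x y
    rw [hSapp, hSapp, inner_neg_left, inner_neg_right, hA (A x) y, neg_neg, hA x (A y)]
  have hSx : ∀ x, ⟪S x, x⟫ = ⟪A x, A x⟫ := by
    intro x
    rw [hSapp, inner_neg_left, hA (A x) x, neg_neg]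
  obtain b := hSsym.eigenvectorBasis hE
  set lam := hSsym.eigenvalues hE with hlam
  have happ : ∀ i, S (hSsym.eigenvectorBasis hE i) = lam i • hSsym.eigenvectorBasis hE i := by
    intro i
    rw [hSsym.apply_eigenvectorBasis hE i]; simp [hlam]
  set b := hSsym.eigenvectorBasis hE with hb
  have hnorm : ∀ i, ‖b i‖ = 1 := fun i => b.orthonormal.1 i
  have hlam_eq : ∀ i, lam i = ⟪S (b i), b i⟫ := by
    intro i
    rw [happ i, real_inner_smul_left, real_inner_self_eq_norm_sq, hnorm i]
    simp
  have hnonneg : ∀ i, 0 ≤ lam i := by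
    intro i
    rw [hlam_eq i, hSx]
    exact real_inner_self_nonneg
  have hAA : ∀ i, A (A (b i)) = (-lam i) • b i := by
    intro i
    have := happ i
    rw [hSapp] at this
    have h2 := congrArg Neg.neg this
    rw [neg_neg] at h2
    rw [h2, neg_smul]
  refine ⟨b, lam, hnonneg, hAA, ?_, ?_⟩
  · intro k hk
    have hpow2 : ∀ (m : ℕ) i, ((A ^ 2) ^ m) (b i) = ((-lam i)^m) • b i := by
      intro m i
      have h2 : (A ^ 2) (b i) = (-lam i) • b i := by
        rw [pow_two, Module.End.mul_apply, hAA i]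
      induction m with
      | zero => simp
      | succ m ih =>
        rw [pow_succ, Module.End.mul_apply, h2, map_smul, ih, smul_smul, pow_succ,
          mul_comm]
    have hpow : ∀ i, (A ^ (2*k)) (b i) = ((-lam i)^k) • b i := by
      intro i; rw [pow_mul]; exact hpow2 k i
    rw [trace_diag b _ _ hpow]
    have : ∀ i, (-lam i)^k = (-1:ℝ)^k * lam i ^ k := fun i => by rw [neg_pow]
    rw [Finset.sum_congr rfl (fun i _ => this i), ← Finset.mul_sum]
  · intro hz
    have hS0 : S = 0 := by
      apply b.toBasis.ext
      intro i
      rw [OrthonormalBasis.coe_toBasis, happ i, hz i]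
      simp
    ext x
    have : ⟪A x, A x⟫ = 0 := by rw [← hSx x, hS0]; simp
    simpa using inner_self_eq_zero.mp this
universe u v

set_option maxHeartbeats 2000000 in
theorem core (n : ℕ) :
    ∀ {E : Type u} {F : Type v} [NormedAddCommGroup E] [InnerProductSpace ℝ E]
      [NormedAddCommGroup F] [InnerProductSpace ℝ F] [FiniteDimensional ℝ E]
      [FiniteDimensional ℝ F]
      (_ : finrank ℝ E = n) (_ : finrank ℝ F = n) (A : E →ₗ[ℝ] E) (B : F →ₗ[ℝ] F),
      (∀ X Y : E, ⟪A X, Y⟫ = -⟪X, A Y⟫) →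
      (∀ X Y : F, ⟪B X, Y⟫ = -⟪X, B Y⟫) →
      (∀ k : ℕ, 1 ≤ k → LinearMap.trace ℝ E (A ^ (2*k)) = LinearMap.trace ℝ F (B ^ (2*k))) →
      ∃ e : E ≃ₗᵢ[ℝ] F, ∀ x : E, B (e x) = e (A x) := by
  induction n using Nat.strong_induction_on with
  | _ n IH =>
  intro E F _ _ _ _ _ _ hE hF A B hA hB htr
  obtain ⟨bE, lam, hl0, hAAe, htrA, hzA⟩ := skew_spec hE A hA
  obtain ⟨bF, kap, hk0, hBBf, htrB, hzB⟩ := skew_spec hF B hB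
  have hsum : ∀ k : ℕ, 1 ≤ k → ∑ i, lam i ^ k = ∑ j, kap j ^ k := by
    intro k hk
    have h1 := htrA k hk
    have h2 := htrB k hk
    have h3 := htr k hk
    rw [h1, h2] at h3
    exact mul_left_cancel₀ (pow_ne_zero k (by norm_num)) h3
  by_cases hA0 : A = 0
  · -- A = 0, hence B = 0
    have hlam0 : ∀ i, lam i = 0 := by
      intro i
      have := hAAe i
      rw [hA0] at this
      simp only [LinearMap.zero_apply] at this
      have hb := bE.orthonormal.1 i
      have : (-lam i) • bE i = 0 := this.symm
      rcases smul_eq_zero.mp this with h | h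
      · linarith [neg_eq_zero.mp h]
      · exfalso; rw [h] at hb; simp at hb
    have hkap0 : ∀ j, kap j = 0 := by
      have h1 : ∑ j, kap j = 0 := by
        have := hsum 1 le_rfl
        simp only [pow_one] at this
        rw [← this]
        simp [hlam0]
      intro j
      have := (Finset.sum_eq_zero_iff_of_nonneg (fun j _ => hk0 j)).mp h1
      simpa using this j (Finset.mem_univ j)
    have hB0 : B = 0 := hzB hkap0
    refine ⟨bE.repr.trans bF.repr.symm, ?_⟩
    intro x
    rw [hA0, hB0]
    simp
  · -- main case : A ≠ 0
    have hn0 : n ≠ 0 := by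
      intro h
      apply hA0
      have hsub : Subsingleton E := by
        have : finrank ℝ E = 0 := by omega
        exact finrank_zero_iff.mp this
      ext x
      simp [Subsingleton.elim x 0]
    haveI : Nonempty (Fin n) := ⟨⟨0, Nat.pos_of_ne_zero hn0⟩⟩
    obtain ⟨i0, hi0⟩ := Finite.exists_max lam
    obtain ⟨j0, hj0⟩ := Finite.exists_max kap
    set M := lam i0 with hMdef
    have hMpos : 0 < M := by
      rcases lt_or_eq_of_le (hl0 i0) with h | h
      · exact h
      · exact absurd (hzA fun i => le_antisymm (h ▸ hi0 i) (hl0 i)) hA0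
    have hMM : kap j0 = M := by
      have h1 : M ≤ kap j0 := psum_max_le lam kap hl0 hsum i0 hMpos (kap j0) (hk0 j0) hj0 hk0
      have h2 : kap j0 ≤ M := by
        refine psum_max_le kap lam hk0 (fun k hk => (hsum k hk).symm) j0 ?_ M hMpos.le hi0 hl0
        exact lt_of_lt_of_le hMpos h1
      exact le_antisymm h2 h1
    set θ := Real.sqrt M with hθdef
    have hθpos : 0 < θ := Real.sqrt_pos.mpr hMpos
    have hθne : θ ≠ 0 := ne_of_gt hθpos
    have hθ2 : θ ^ 2 = M := Real.sq_sqrt hMpos.le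
    set e : E := bE i0 with hedef
    set f : F := bF j0 with hfdef
    have he1 : ‖e‖ = 1 := bE.orthonormal.1 i0
    have hf1 : ‖f‖ = 1 := bF.orthonormal.1 j0
    have hee : ⟪e, e⟫ = 1 := by rw [real_inner_self_eq_norm_sq, he1]; norm_num
    have hff : ⟪f, f⟫ = 1 := by rw [real_inner_self_eq_norm_sq, hf1]; norm_num
    have hAAe0 : A (A e) = -M • e := by simpa using hAAe i0
    have hBBf0 : B (B f) = -M • f := by
      have := hBBf j0
      rw [hMM] at this
      simpa using this
    have horthE : ⟪e, A e⟫ = 0 := by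
      have h1 := hA e e
      have h2 : ⟪A e, e⟫ = ⟪e, A e⟫ := real_inner_comm _ _
      linarith
    have horthE' : ⟪A e, e⟫ = 0 := by rw [real_inner_comm]; exact horthE
    have horthF : ⟪f, B f⟫ = 0 := by
      have h1 := hB f f
      have h2 : ⟪B f, f⟫ = ⟪f, B f⟫ := real_inner_comm _ _
      linarith
    have horthF' : ⟪B f, f⟫ = 0 := by rw [real_inner_comm]; exact horthF
    have hnAe : ⟪A e, A e⟫ = M := by
      rw [hA e (A e), hAAe0, real_inner_smul_right, hee]
      ring
    have hnBf : ⟪B f, B f⟫ = M := by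
      rw [hB f (B f), hBBf0, real_inner_smul_right, hff]
      ring
    set g : Fin 2 → E := ![e, θ⁻¹ • A e] with hgdef
    set w : Fin 2 → F := ![f, θ⁻¹ • B f] with hwdef
    have hgON : Orthonormal ℝ g := by
      rw [orthonormal_iff_ite]
      intro i j
      fin_cases i <;> fin_cases j <;>
        simp [hgdef, real_inner_smul_left, real_inner_smul_right, horthE, horthE', hee, hnAe]
      · exact Or.inl he1
      field_simp
      left
      rw [norm_smul, Real.norm_eq_abs, abs_of_pos (by positivity : (0:ℝ) < 1 / θ)]
      have hn : ‖A e‖ = θ := by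
        rw [hθdef, ← hnAe, real_inner_self_eq_norm_sq, Real.sqrt_sq (norm_nonneg _)]
      rw [hn]; field_simp
    have hwON : Orthonormal ℝ w := by
      rw [orthonormal_iff_ite]
      intro i j
      fin_cases i <;> fin_cases j <;>
        simp [hwdef, real_inner_smul_left, real_inner_smul_right, horthF, horthF', hff, hnBf]
      · exact Or.inl hf1
      field_simp
      left
      rw [norm_smul, Real.norm_eq_abs, abs_of_pos (by positivity : (0:ℝ) < 1 / θ)]
      have hn : ‖B f‖ = θ := by
        rw [hθdef, ← hnBf, real_inner_self_eq_norm_sq, Real.sqrt_sq (norm_nonneg _)]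
      rw [hn]; field_simp
    set P : Submodule ℝ E := Submodule.span ℝ (Set.range g) with hPdef
    set Q : Submodule ℝ F := Submodule.span ℝ (Set.range w) with hQdef
    have hgmem : ∀ i, g i ∈ P := fun i => Submodule.subset_span ⟨i, rfl⟩
    have hwmem : ∀ i, w i ∈ Q := fun i => Submodule.subset_span ⟨i, rfl⟩
    have hAe_eq : A e = θ • g 1 := by
      simp [hgdef, smul_smul, mul_inv_cancel₀ hθne]
    have hBf_eq : B f = θ • w 1 := by
      simp [hwdef, smul_smul, mul_inv_cancel₀ hθne]
    have hAeP : A e ∈ P := by rw [hAe_eq]; exact Submodule.smul_mem _ _ (hgmem 1)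
    have hBfQ : B f ∈ Q := by rw [hBf_eq]; exact Submodule.smul_mem _ _ (hwmem 1)
    have hinvP : ∀ x ∈ P, A x ∈ P := by
      intro x hx
      induction hx using Submodule.span_induction with
      | mem y hy =>
        obtain ⟨i, rfl⟩ := hy
        fin_cases i
        · exact hAeP
        · show A (g 1) ∈ P
          have : A (g 1) = θ⁻¹ • (-M • e) := by
            simp only [hgdef]
            rw [show (![e, θ⁻¹ • A e] : Fin 2 → E) 1 = θ⁻¹ • A e from rfl, map_smul, hAAe0]
          rw [this]
          exact Submodule.smul_mem _ _ (Submodule.smul_mem _ _ (hgmem 0))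
      | zero => simp
      | add y z _ _ hy hz => rw [map_add]; exact Submodule.add_mem _ hy hz
      | smul c y _ hy => rw [map_smul]; exact Submodule.smul_mem _ _ hy
    have hinvQ : ∀ x ∈ Q, B x ∈ Q := by
      intro x hx
      induction hx using Submodule.span_induction with
      | mem y hy =>
        obtain ⟨i, rfl⟩ := hy
        fin_cases i
        · exact hBfQ
        · show B (w 1) ∈ Q
          have : B (w 1) = θ⁻¹ • (-M • f) := by
            simp only [hwdef]
            rw [show (![f, θ⁻¹ • B f] : Fin 2 → F) 1 = θ⁻¹ • B f from rfl, map_smul, hBBf0]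
          rw [this]
          exact Submodule.smul_mem _ _ (Submodule.smul_mem _ _ (hwmem 0))
      | zero => simp
      | add y z _ _ hy hz => rw [map_add]; exact Submodule.add_mem _ hy hz
      | smul c y _ hy => rw [map_smul]; exact Submodule.smul_mem _ _ hy
    have hinvP' : ∀ x ∈ Pᗮ, A x ∈ Pᗮ := by
      intro x hx
      rw [Submodule.mem_orthogonal] at hx ⊢
      intro y hy
      have h1 := hA y x
      have h2 : ⟪A y, x⟫ = 0 := hx (A y) (hinvP y hy)
      linarith
    have hinvQ' : ∀ x ∈ Qᗮ, B x ∈ Qᗮ := by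
      intro x hx
      rw [Submodule.mem_orthogonal] at hx ⊢
      intro y hy
      have h1 := hB y x
      have h2 : ⟪B y, x⟫ = 0 := hx (B y) (hinvQ y hy)
      linarith
    have hfinP : finrank ℝ P = 2 := by
      rw [hPdef, finrank_span_eq_card hgON.linearIndependent]
      simp
    have hfinQ : finrank ℝ Q = 2 := by
      rw [hQdef, finrank_span_eq_card hwON.linearIndependent]
      simp
    have hn2 : 2 ≤ n := by
      have := P.finrank_le
      omega
    have hfinP' : finrank ℝ Pᗮ = n - 2 := by
      have := P.finrank_add_finrank_orthogonal
      omega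
    have hfinQ' : finrank ℝ Qᗮ = n - 2 := by
      have := Q.finrank_add_finrank_orthogonal
      omega
    -- orthonormal bases of the planes
    set wP : Fin 2 → P := fun i => ⟨g i, hgmem i⟩ with hwPdef
    set wQ : Fin 2 → Q := fun i => ⟨w i, hwmem i⟩ with hwQdef
    have hwPON : Orthonormal ℝ wP := by
      rw [orthonormal_iff_ite]
      intro i j
      have := orthonormal_iff_ite.mp hgON i j
      rwa [Submodule.coe_inner]
    have hwQON : Orthonormal ℝ wQ := by
      rw [orthonormal_iff_ite]
      intro i j
      have := orthonormal_iff_ite.mp hwON i j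
      rwa [Submodule.coe_inner]
    have hspanP : ⊤ ≤ Submodule.span ℝ (Set.range wP) := by
      rw [hwPON.linearIndependent.span_eq_top_of_card_eq_finrank (by simp [hfinP])]
    have hspanQ : ⊤ ≤ Submodule.span ℝ (Set.range wQ) := by
      rw [hwQON.linearIndependent.span_eq_top_of_card_eq_finrank (by simp [hfinQ])]
    set bP : OrthonormalBasis (Fin 2) ℝ P := OrthonormalBasis.mk hwPON hspanP with hbPdef
    set bQ : OrthonormalBasis (Fin 2) ℝ Q := OrthonormalBasis.mk hwQON hspanQ with hbQdef
    have hbP : ∀ i, bP i = wP i := fun i => by rw [hbPdef, OrthonormalBasis.coe_mk]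
    have hbQ : ∀ i, bQ i = wQ i := fun i => by rw [hbQdef, OrthonormalBasis.coe_mk]
    -- restricted endomorphisms
    set A' : P →ₗ[ℝ] P := A.restrict hinvP with hA'def
    set B' : Q →ₗ[ℝ] Q := B.restrict hinvQ with hB'def
    set A'' : Pᗮ →ₗ[ℝ] Pᗮ := A.restrict hinvP' with hA''def
    set B'' : Qᗮ →ₗ[ℝ] Qᗮ := B.restrict hinvQ' with hB''def
    -- action on the basis
    have hA'0 : A' (wP 0) = θ • wP 1 := by
      apply Subtype.ext
      rw [hA'def]
      simp only [LinearMap.restrict_coe_apply, SetLike.val_smul]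
      show A (g 0) = θ • g 1
      rw [show g 0 = e from rfl]
      exact hAe_eq
    have hA'1 : A' (wP 1) = (-θ) • wP 0 := by
      apply Subtype.ext
      rw [hA'def]
      simp only [LinearMap.restrict_coe_apply, SetLike.val_smul]
      show A (g 1) = (-θ) • g 0
      rw [show g 1 = θ⁻¹ • A e from rfl, show g 0 = e from rfl, map_smul, hAAe0]
      rw [smul_smul, neg_smul, ← neg_smul]
      congr 1
      rw [← hθ2]
      field_simp
    have hB'0 : B' (wQ 0) = θ • wQ 1 := by
      apply Subtype.ext
      rw [hB'def]
      simp only [LinearMap.restrict_coe_apply, SetLike.val_smul]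
      show B (w 0) = θ • w 1
      rw [show w 0 = f from rfl]
      exact hBf_eq
    have hB'1 : B' (wQ 1) = (-θ) • wQ 0 := by
      apply Subtype.ext
      rw [hB'def]
      simp only [LinearMap.restrict_coe_apply, SetLike.val_smul]
      show B (w 1) = (-θ) • w 0
      rw [show w 1 = θ⁻¹ • B f from rfl, show w 0 = f from rfl, map_smul, hBBf0]
      rw [smul_smul, neg_smul, ← neg_smul]
      congr 1
      rw [← hθ2]
      field_simp
    -- A'^2 = -M • id
    have hA'sq : A' ^ 2 = (-M) • (1 : P →ₗ[ℝ] P) := by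
      apply bP.toBasis.ext
      intro i
      rw [OrthonormalBasis.coe_toBasis]
      rw [pow_two, Module.End.mul_apply, hbP i]
      simp only [LinearMap.smul_apply, Module.End.one_apply]
      revert i
      rw [Fin.forall_fin_two]
      constructor
      · rw [hA'0, map_smul, hA'1, smul_smul]
        congr 1
        rw [← hθ2]; ring
      · rw [hA'1, map_smul, hA'0, smul_smul]
        congr 1
        rw [← hθ2]; ring
    have hB'sq : B' ^ 2 = (-M) • (1 : Q →ₗ[ℝ] Q) := by
      apply bQ.toBasis.ext
      intro i
      rw [OrthonormalBasis.coe_toBasis]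
      rw [pow_two, Module.End.mul_apply, hbQ i]
      simp only [LinearMap.smul_apply, Module.End.one_apply]
      revert i
      rw [Fin.forall_fin_two]
      constructor
      · rw [hB'0, map_smul, hB'1, smul_smul]
        congr 1
        rw [← hθ2]; ring
      · rw [hB'1, map_smul, hB'0, smul_smul]
        congr 1
        rw [← hθ2]; ring
    -- traces of restrictions to the planes
    have htrP : ∀ k : ℕ, LinearMap.trace ℝ P (A' ^ (2*k)) = 2 * (-M)^k := by
      intro k
      rw [pow_mul, hA'sq, smul_pow, one_pow, map_smul, LinearMap.trace_one, hfinP]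
      simp [mul_comm]
    have htrQ : ∀ k : ℕ, LinearMap.trace ℝ Q (B' ^ (2*k)) = 2 * (-M)^k := by
      intro k
      rw [pow_mul, hB'sq, smul_pow, one_pow, map_smul, LinearMap.trace_one, hfinQ]
      simp [mul_comm]
    -- equal traces for the restrictions to the orthogonal complements
    have htr'' : ∀ k : ℕ, 1 ≤ k →
        LinearMap.trace ℝ Pᗮ (A'' ^ (2*k)) = LinearMap.trace ℝ Qᗮ (B'' ^ (2*k)) := by
      intro k hk
      have hdE := trace_decomp P (A ^ (2*k)) (pow_mapsTo A P hinvP (2*k))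
        (pow_mapsTo A Pᗮ hinvP' (2*k))
      have hdF := trace_decomp Q (B ^ (2*k)) (pow_mapsTo B Q hinvQ (2*k))
        (pow_mapsTo B Qᗮ hinvQ' (2*k))
      rw [← restrict_pow_eq A P hinvP (2*k), ← restrict_pow_eq A Pᗮ hinvP' (2*k)] at hdE
      rw [← restrict_pow_eq B Q hinvQ (2*k), ← restrict_pow_eq B Qᗮ hinvQ' (2*k)] at hdF
      rw [← hA'def, ← hA''def] at hdE
      rw [← hB'def, ← hB''def] at hdF
      have := htr k hk
      rw [hdE, hdF, htrP k, htrQ k] at this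
      linarith
    -- skewness of the restrictions to the complements
    have hA''skew : ∀ X Y : (Pᗮ : Submodule ℝ E), ⟪A'' X, Y⟫ = -⟪X, A'' Y⟫ := by
      intro X Y
      rw [Submodule.coe_inner, Submodule.coe_inner]
      rw [hA''def]
      simp only [LinearMap.restrict_coe_apply]
      exact hA X Y
    have hB''skew : ∀ X Y : (Qᗮ : Submodule ℝ F), ⟪B'' X, Y⟫ = -⟪X, B'' Y⟫ := by
      intro X Y
      rw [Submodule.coe_inner, Submodule.coe_inner]
      rw [hB''def]
      simp only [LinearMap.restrict_coe_apply]
      exact hB X Y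
    -- induction
    obtain ⟨e', he'⟩ := IH (n - 2) (by omega) hfinP' hfinQ' A'' B'' hA''skew hB''skew htr''
    -- the isometry between the planes
    set u : P ≃ₗᵢ[ℝ] Q := bP.repr.trans bQ.repr.symm with hudef
    have hu : ∀ i, u (wP i) = wQ i := by
      intro i
      rw [hudef]
      simp only [LinearIsometryEquiv.trans_apply]
      rw [← hbP i, ← hbQ i, OrthonormalBasis.repr_self]
      exact bQ.repr_symm_single i
    have hintw : ∀ p : P, B' (u p) = u (A' p) := by
      have : (B'.comp (u.toLinearEquiv : P ≃ₗ[ℝ] Q).toLinearMap) =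
          ((u.toLinearEquiv : P ≃ₗ[ℝ] Q).toLinearMap).comp A' := by
        apply bP.toBasis.ext
        intro i
        rw [OrthonormalBasis.coe_toBasis, hbP i]
        simp only [LinearMap.comp_apply, LinearEquiv.coe_coe]
        have hcoe : ∀ p : P, (u.toLinearEquiv : P →ₗ[ℝ] Q) p = u p := fun p => rfl
        revert i
        rw [Fin.forall_fin_two]
        constructor
        · show B' (u.toLinearEquiv (wP 0)) = u.toLinearEquiv (A' (wP 0))
          rw [show (u.toLinearEquiv (wP 0) : Q) = u (wP 0) from rfl, hu 0, hB'0, hA'0, map_smul]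
          rw [show (u.toLinearEquiv (wP 1) : Q) = u (wP 1) from rfl, hu 1]
        · show B' (u.toLinearEquiv (wP 1)) = u.toLinearEquiv (A' (wP 1))
          rw [show (u.toLinearEquiv (wP 1) : Q) = u (wP 1) from rfl, hu 1, hB'1, hA'1, map_smul]
          rw [show (u.toLinearEquiv (wP 0) : Q) = u (wP 0) from rfl, hu 0]
      intro p
      have := congrArg (fun (L : P →ₗ[ℝ] Q) => L p) this
      simpa using this
    -- assemble the global isometry
    set πP : E →ₗ[ℝ] P := (P.orthogonalProjectionOnto).toLinearMap with hπP
    set πP' : E →ₗ[ℝ] Pᗮ := (Pᗮ.orthogonalProjectionOnto).toLinearMap with hπP'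
    set uL : P →ₗ[ℝ] Q := (u.toLinearEquiv : P ≃ₗ[ℝ] Q).toLinearMap with huL
    set vL : Pᗮ →ₗ[ℝ] Qᗮ := (e'.toLinearEquiv : Pᗮ ≃ₗ[ℝ] Qᗮ).toLinearMap with hvL
    set φ : E →ₗ[ℝ] F :=
      Q.subtype ∘ₗ uL ∘ₗ πP + Qᗮ.subtype ∘ₗ vL ∘ₗ πP' with hφdef
    have hφapp : ∀ x : E, φ x = (u (πP x) : F) + (e' (πP' x) : F) := by
      intro x
      rw [hφdef]
      rfl
    have hsplitE : ∀ x : E, ((πP x : E) + (πP' x : E)) = x := fun x =>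
      P.starProjection_add_starProjection_orthogonal x
    have horthQ : ∀ (q1 : Q) (q2 : Qᗮ), ⟪(q1 : F), (q2 : F)⟫ = 0 := by
      intro q1 q2
      exact q2.2 q1 q1.2
    have horthP : ∀ (p1 : P) (p2 : Pᗮ), ⟪(p1 : E), (p2 : E)⟫ = 0 := by
      intro p1 p2
      exact p2.2 p1 p1.2
    have hφinner : ∀ x y : E, ⟪φ x, φ y⟫ = ⟪x, y⟫ := by
      intro x y
      rw [hφapp x, hφapp y]
      rw [inner_add_left, inner_add_right, inner_add_right]
      rw [horthQ (u (πP x)) (e' (πP' y))]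
      have hc1 : ⟪((e' (πP' x)) : F), ((u (πP y)) : F)⟫ = 0 := by
        rw [real_inner_comm]; exact horthQ _ _
      rw [hc1]
      have h1 : ⟪((u (πP x)) : F), ((u (πP y)) : F)⟫ = ⟪(πP x : E), (πP y : E)⟫ := by
        rw [← Submodule.coe_inner, ← Submodule.coe_inner]
        exact u.inner_map_map (πP x) (πP y)
      have h2 : ⟪((e' (πP' x)) : F), ((e' (πP' y)) : F)⟫ = ⟪(πP' x : E), (πP' y : E)⟫ := by
        rw [← Submodule.coe_inner, ← Submodule.coe_inner]
        exact e'.inner_map_map (πP' x) (πP' y)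
      rw [h1, h2]
      conv_rhs => rw [← hsplitE x, ← hsplitE y]
      rw [inner_add_left, inner_add_right, inner_add_right]
      rw [horthP (πP x) (πP' y)]
      have hc2 : ⟪((πP' x : E)), ((πP y : E))⟫ = 0 := by
        rw [real_inner_comm]; exact horthP _ _
      rw [hc2]
    have hφinj : Function.Injective φ := by
      intro x y hxy
      have h0 : ⟪x - y, x - y⟫ = 0 := by
        have := hφinner (x - y) (x - y)
        rw [map_sub] at this
        rw [← this, hxy]
        simp
      have := inner_self_eq_zero.mp h0
      exact sub_eq_zero.mp this
    have hφsurj : Function.Surjective φ := by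
      rw [← LinearMap.range_eq_top]
      rw [← LinearMap.ker_eq_bot] at hφinj
      exact (LinearMap.injective_iff_surjective_of_finrank_eq_finrank
        (hE.trans hF.symm)).mp (LinearMap.ker_eq_bot.mp hφinj) |> LinearMap.range_eq_top.mpr
    set Φ : E ≃ₗ[ℝ] F := LinearEquiv.ofBijective φ ⟨hφinj, hφsurj⟩ with hΦdef
    have hΦapp : ∀ x, Φ x = φ x := fun x => rfl
    refine ⟨Φ.isometryOfInner (fun x y => by rw [hΦapp, hΦapp]; exact hφinner x y), ?_⟩
    intro x
    have hiso_app : ∀ y : E,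
        (Φ.isometryOfInner (fun x y => by rw [hΦapp, hΦapp]; exact hφinner x y)) y = φ y :=
      fun y => rfl
    rw [hiso_app, hiso_app]
    -- B (φ x) = φ (A x)
    set px := πP x with hpx
    set qx := πP' x with hqx
    have hAx : A x = (A' px : E) + (A'' qx : E) := by
      conv_lhs => rw [← hsplitE x]
      rw [map_add]
      rw [hA'def, hA''def]
      simp only [LinearMap.restrict_coe_apply]
      rfl
    have hπPAx : πP (A x) = A' px := by
      rw [hAx, map_add]
      have h1 : πP ((A' px : E)) = A' px := by
        rw [hπP]
        exact orthogonalProjectionOnto_mem_subspace_eq_self (A' px)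
      have h2 : πP ((A'' qx : E)) = 0 := by
        rw [hπP]
        exact orthogonalProjectionOnto_apply_of_mem_orthogonal (A'' qx).2
      rw [h1, h2, add_zero]
    have hπP'Ax : πP' (A x) = A'' qx := by
      rw [hAx, map_add]
      have h1 : πP' ((A' px : E)) = 0 := by
        rw [hπP']
        apply orthogonalProjectionOnto_apply_of_mem_orthogonal
        rw [Submodule.orthogonal_orthogonal]
        exact (A' px).2
      have h2 : πP' ((A'' qx : E)) = A'' qx := by
        rw [hπP']
        exact orthogonalProjectionOnto_mem_subspace_eq_self (A'' qx)
      rw [h1, h2, zero_add]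
    have hrhs : φ (A x) = (u (A' px) : F) + (e' (A'' qx) : F) := by
      rw [hφapp, hπPAx, hπP'Ax]
    have hlhs : B (φ x) = (B' (u px) : F) + (B'' (e' qx) : F) := by
      rw [hφapp, map_add]
      rw [hB'def, hB''def]
      simp only [LinearMap.restrict_coe_apply]
      rfl
    rw [hlhs, hrhs, hintw px, he' qx]

/-- Let `A` and `B` be skew-symmetric endomorphisms of an `n`-dimensional real
inner product space such that `tr(A^{2k}) = tr(B^{2k})` for every integer `k ≥ 1`. Then `A` and
`B` are orthogonally conjugate, i.e. there exists an orthogonal transformation `u` with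
`B = u ∘ A ∘ u⁻¹`. -/
theorem statement15 {E : Type*} [NormedAddCommGroup E] [InnerProductSpace ℝ E]
    [FiniteDimensional ℝ E] (n : ℕ) (hn : Module.finrank ℝ E = n)
    (A B : E →ₗ[ℝ] E)
    (hA : ∀ X Y : E, ⟪A X, Y⟫ = -⟪X, A Y⟫)
    (hB : ∀ X Y : E, ⟪B X, Y⟫ = -⟪X, B Y⟫)
    (htr : ∀ k : ℕ, 1 ≤ k →
      LinearMap.trace ℝ E (A ^ (2 * k)) = LinearMap.trace ℝ E (B ^ (2 * k))) :
    ∃ u : E ≃ₗᵢ[ℝ] E, ∀ x : E, B x = u (A (u.symm x)) := by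
  obtain ⟨e, he⟩ := core n hn hn A B hA hB htr
  refine ⟨e, fun x => ?_⟩
  have := he (e.symm x)
  rwa [e.apply_symm_apply] at this
end
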